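/- arXiv:0910.1182 — 3 statements merged into one kernel-verified Lean document; each statement's English description precedes it below -/
import Mathlib

section
/- Let d = m + n with gcd(m,n) = 1, and let P be the (0,1)-simplex with vertices v_0 = 0 and v_i = e_i + ... + e_{i+m−1} (cyclically) for 1 ≤ i ≤ d. Then the δ-vector of P is shifted symmetric: δ_{d−i} = δ_{i+1} for all 0 ≤ i ≤ ⌊(d−1)/2⌋. -/
open scoped BigOperators Pointwise

noncomputable section

/-- The lattice points of a subset of `ℝ^N`. -/
def latticePoints {N : ℕ} (P : Set (Fin N → ℝ)) : Set (Fin N → ℤ) :=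
  {x | (fun i => (x i : ℝ)) ∈ P}

/-- The Ehrhart counting function `i(P,n) = |nP ∩ ℤ^N|`. -/
def ehrhart {N : ℕ} (P : Set (Fin N → ℝ)) (n : ℕ) : ℤ :=
  ((latticePoints ((n : ℝ) • P)).ncard : ℤ)

/-- The `i`-th entry of the Ehrhart δ-vector of a `d`-dimensional polytope,
i.e. the coefficient of `λ^i` in `(1-λ)^{d+1} · Σ_{n ≥ 0} i(P,n) λ^n`. -/
def deltaVec {N : ℕ} (P : Set (Fin N → ℝ)) (d i : ℕ) : ℤ :=
  ∑ j ∈ Finset.range (i + 1),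
    (-1 : ℤ) ^ (i - j) * (Nat.choose (d + 1) (i - j)) * ehrhart P j

/-- `P ⊆ ℝ^N` is an integral convex polytope of dimension `d`. -/
def IsIntegralPolytope {N : ℕ} (P : Set (Fin N → ℝ)) (d : ℕ) : Prop :=
  (∃ V : Finset (Fin N → ℤ),
      P = convexHull ℝ ((fun x => fun i => ((x i : ℤ) : ℝ)) '' (V : Set (Fin N → ℤ)))) ∧
    Module.finrank ℝ (affineSpan ℝ P).direction = d

section
open Finset PowerSeries

lemma coeff_one_sub_X_pow (N i : ℕ) :
    (PowerSeries.coeff (R := ℤ) i) ((1 - PowerSeries.X) ^ N) = (-1) ^ i * N.choose i := by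
  have h : ((1 : ℤ⟦X⟧) - X) ^ N
      = ∑ k ∈ range (N + 1), ((-1) ^ k * (N.choose k : ℤ)) • (X : ℤ⟦X⟧) ^ k := by
    rw [sub_eq_add_neg, add_comm, add_pow]
    refine Finset.sum_congr rfl fun k hk => ?_
    rw [zsmul_eq_mul, neg_pow, one_pow]
    push_cast
    ring
  rw [h, map_sum]
  have h2 : ∀ k ∈ range (N + 1),
      (PowerSeries.coeff (R := ℤ) i) (((-1) ^ k * (N.choose k : ℤ)) • (X : ℤ⟦X⟧) ^ k)
        = if i = k then (-1) ^ k * (N.choose k : ℤ) else 0 := by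
    intro k _
    rw [map_smul, PowerSeries.coeff_X_pow, smul_eq_mul]
    split <;> simp
  rw [Finset.sum_congr rfl h2, Finset.sum_ite_eq (range (N + 1)) i]
  rcases le_or_gt i N with hi | hi
  · simp [Nat.lt_succ_of_le hi]
  · simp only [mem_range, Nat.lt_succ_iff, not_le.mpr hi, if_false]
    rw [Nat.choose_eq_zero_of_lt hi]
    simp

lemma coeff_shifted_inv (d h q : ℕ) (hh : h ≤ d) :
    (PowerSeries.coeff (R := ℤ) q) ((PowerSeries.X : ℤ⟦X⟧) ^ h * (invOneSubPow ℤ (d + 1)).val)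
      = ((q + d - h).choose d : ℤ) := by
  rw [PowerSeries.coeff_X_pow_mul']
  rcases le_or_gt h q with hq | hq
  · rw [if_pos hq, invOneSubPow_val_succ_eq_mk_add_choose, PowerSeries.coeff_mk]
    congr 2
    omega
  · rw [if_neg (not_le.mpr hq)]
    rw [Nat.choose_eq_zero_of_lt (by omega)]
    simp

lemma key_identity (d h i : ℕ) (hh : h ≤ d) :
    (∑ j ∈ range (i + 1),
        (-1 : ℤ) ^ (i - j) * ((d + 1).choose (i - j) : ℤ) * ((j + d - h).choose d : ℤ))
      = if i = h then 1 else 0 := by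
  have hAB : ((1 - PowerSeries.X) ^ (d + 1)) * ((PowerSeries.X : ℤ⟦X⟧) ^ h *
      (invOneSubPow ℤ (d + 1)).val) = (PowerSeries.X : ℤ⟦X⟧) ^ h := by
    rw [mul_left_comm, ← invOneSubPow_inv_eq_one_sub_pow, Units.inv_eq_val_inv,
      Units.inv_mul, mul_one]
  have key := congrArg (PowerSeries.coeff (R := ℤ) i) hAB
  rw [PowerSeries.coeff_mul, PowerSeries.coeff_X_pow,
    Finset.Nat.sum_antidiagonal_eq_sum_range_succ_mk] at key
  have key2 : (∑ k ∈ range (i + 1),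
      (-1 : ℤ) ^ k * ((d + 1).choose k : ℤ) * (((i - k) + d - h).choose d : ℤ))
      = if i = h then 1 else 0 := by
    rw [← key]
    refine Finset.sum_congr rfl fun k hk => ?_
    rw [coeff_one_sub_X_pow, coeff_shifted_inv d h _ hh]
  refine Eq.trans ?_ key2
  refine Eq.trans (Finset.sum_range_reflect
    (fun j => (-1 : ℤ) ^ (i - j) * ((d + 1).choose (i - j) : ℤ)
      * ((j + d - h).choose d : ℤ)) (i + 1)).symm ?_
  refine Finset.sum_congr rfl fun k hk => ?_
  simp only [mem_range, Nat.lt_succ_iff] at hk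
  have e1 : i + 1 - 1 - k = i - k := by omega
  have e2 : i - (i - k) = k := by omega
  rw [e1, e2]




lemma card_bounded (D M : ℕ) :
    ((Fintype.piFinset fun _ : Fin D => Finset.range (M + 1)).filter
        fun a => ∑ i, a i ≤ M).card = (M + D).choose D := by
  induction D generalizing M with
  | zero => simp
  | succ D ih =>
    rw [Finset.card_eq_sum_card_fiberwise (f := fun a => a 0) (t := Finset.range (M + 1))
      (fun a ha => by
        simp only [Finset.mem_coe, mem_filter, Fintype.mem_piFinset, mem_range] at ha
        exact mem_range.mpr (ha.1 0))]
    have hfib : ∀ t ∈ Finset.range (M + 1),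
        (((Fintype.piFinset fun _ : Fin (D+1) => Finset.range (M + 1)).filter
          fun a => ∑ i, a i ≤ M).filter fun a => a 0 = t).card
        = ((M - t) + D).choose D := by
      intro t ht
      rw [← ih (M - t)]
      refine Finset.card_bij' (fun a _ => Fin.tail a) (fun b _ => Fin.cons t b) ?_ ?_ ?_ ?_
      · intro a ha
        simp only [mem_filter, Fintype.mem_piFinset, mem_range, Fin.sum_univ_succ] at ha ⊢
        obtain ⟨⟨h1, h2⟩, h3⟩ := ha
        have hsum : t + ∑ i : Fin D, Fin.tail a i ≤ M := by
          rw [← h3]; exact h2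
        constructor
        · intro i
          have : Fin.tail a i ≤ ∑ i : Fin D, Fin.tail a i :=
            Finset.single_le_sum (fun i _ => Nat.zero_le _) (mem_univ i)
          omega
        · omega
      · intro b hb
        simp only [mem_filter, Fintype.mem_piFinset, mem_range] at hb ⊢
        obtain ⟨h1, h2⟩ := hb
        simp only [mem_range] at ht
        refine ⟨⟨?_, ?_⟩, Fin.cons_zero _ _⟩
        · intro i
          induction i using Fin.cases with
          | zero => simp only [Fin.cons_zero]; omega
          | succ i => simp only [Fin.cons_succ]; have := h1 i; omega
        · rw [Fin.sum_univ_succ, Fin.cons_zero]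
          simp only [Fin.cons_succ]
          omega
      · intro a ha
        simp only [mem_filter] at ha
        have : Fin.cons t (Fin.tail a) = a := by
          rw [← ha.2]; exact Fin.cons_self_tail a
        exact this
      · intro b _
        funext i
        simp [Fin.tail, Fin.cons_succ]
    rw [Finset.sum_congr rfl hfib]
    have hrefl := Finset.sum_range_reflect (fun t => (t + D).choose D) (M + 1)
    have : ∑ t ∈ range (M + 1), ((M - t) + D).choose D
        = ∑ t ∈ range (M + 1), (t + D).choose D := by
      rw [← hrefl]
      refine Finset.sum_congr rfl fun t ht => ?_
      simp only [mem_range, Nat.lt_succ_iff] at ht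
      have e : M + 1 - 1 - t = M - t := by omega
      rw [e]
    rw [this]
    have hIcc := Nat.sum_Icc_choose (M + D) D
    rw [← Finset.Ico_add_one_right_eq_Icc, Finset.sum_Ico_eq_sum_range] at hIcc
    have e : M + D + 1 - D = M + 1 := by omega
    rw [e] at hIcc
    have : ∑ t ∈ range (M + 1), (t + D).choose D
        = ∑ t ∈ range (M + 1), (D + t).choose D := by
      refine Finset.sum_congr rfl fun t _ => by rw [add_comm]
    rw [this, hIcc]
    congr 1

lemma card_slice (D j c : ℕ) (hD : 0 < D) :
    ((Fintype.piFinset fun _ : Fin D => Finset.range (j + 1)).filter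
        fun a => (∑ i, a i) + c ≤ j).card = (j + D - c).choose D := by
  rcases le_or_gt c j with hc | hc
  · have hset : ((Fintype.piFinset fun _ : Fin D => Finset.range (j + 1)).filter
        fun a => (∑ i, a i) + c ≤ j)
        = ((Fintype.piFinset fun _ : Fin D => Finset.range ((j - c) + 1)).filter
        fun a => ∑ i, a i ≤ j - c) := by
      ext a
      simp only [mem_filter, Fintype.mem_piFinset, mem_range]
      constructor
      · rintro ⟨h1, h2⟩
        have hkey : ∀ i, a i ≤ ∑ i, a i := fun i =>
          Finset.single_le_sum (fun i _ => Nat.zero_le _) (mem_univ i)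
        exact ⟨fun i => by have := hkey i; omega, by omega⟩
      · rintro ⟨h1, h2⟩
        exact ⟨fun i => by have := h1 i; omega, by omega⟩
    rw [hset, card_bounded]
    congr 1
    omega
  · have hset : ((Fintype.piFinset fun _ : Fin D => Finset.range (j + 1)).filter
        fun a => (∑ i, a i) + c ≤ j) = ∅ := by
      refine Finset.eq_empty_of_forall_notMem fun a ha => ?_
      simp only [mem_filter] at ha
      omega
    rw [hset, Finset.card_empty, Nat.choose_eq_zero_of_lt (by omega)]



/-- `hkf m d k = ⌈k*d/m⌉`. -/
def hkf (m d k : ℕ) : ℕ := (k * d + m - 1) / m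

lemma hkf_zero (m d : ℕ) (hm : 0 < m) : hkf m d 0 = 0 := by
  unfold hkf
  rw [Nat.zero_mul, Nat.zero_add]
  exact Nat.div_eq_of_lt (by omega)

lemma hkf_le (m d k : ℕ) (hm : 0 < m) (hk : k < m) : hkf m d k ≤ d := by
  unfold hkf
  have h1 : k * d ≤ (m - 1) * d := Nat.mul_le_mul_right d (by omega)
  have h2 : (m - 1) * d = m * d - d := by rw [Nat.sub_mul, Nat.one_mul]
  have h3 : d ≤ m * d := Nat.le_mul_of_pos_left d hm
  have e1 : (d + 1) * m = d * m + m := by rw [Nat.succ_mul]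
  have e2 : d * m = m * d := Nat.mul_comm d m
  have h4 : k * d + m - 1 < (d + 1) * m := by omega
  exact Nat.lt_succ_iff.mp ((Nat.div_lt_iff_lt_mul hm).mpr h4)

lemma hkf_mul_le (m d k : ℕ) (hm : 0 < m) : k * d ≤ m * hkf m d k := by
  unfold hkf
  rcases Nat.eq_zero_or_pos (k * d) with h | h
  · simp [h]
  · have h1 := Nat.div_add_mod (k * d + m - 1) m
    have h2 : (k * d + m - 1) % m < m := Nat.mod_lt _ hm
    omega

lemma hkf_le_mul (m d k : ℕ) (hm : 0 < m) : m * hkf m d k ≤ k * d + m - 1 := by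
  unfold hkf
  have h1 := Nat.div_add_mod (k * d + m - 1) m
  omega

lemma hkf_pair (m d k : ℕ) (hm : 0 < m) (hd : 0 < d) (hcop : Nat.Coprime m d)
    (hk0 : 0 < k) (hkm : k < m) : hkf m d (m - k) = d + 1 - hkf m d k := by
  have hqr := Nat.div_add_mod (k * d) m
  set q := k * d / m with hq
  set r := k * d % m with hr
  have hrm : r < m := Nat.mod_lt _ hm
  have hr0 : r ≠ 0 := by
    intro h0
    have hdvd : m ∣ k * d := Nat.dvd_of_mod_eq_zero h0
    have : m ∣ k := hcop.dvd_of_dvd_mul_right hdvd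
    exact absurd (Nat.le_of_dvd hk0 this) (by omega)
  have hqd : q < d := by
    have h5 : k * d < m * d := Nat.mul_lt_mul_of_lt_of_le hkm le_rfl hd
    by_contra hcon
    push_neg at hcon
    have : m * d ≤ m * q := Nat.mul_le_mul_left m hcon
    omega
  have hkk : hkf m d k = q + 1 := by
    unfold hkf
    have e : k * d + m - 1 = m * q + (r + m - 1) := by omega
    rw [e, Nat.mul_add_div hm]
    have : (r + m - 1) / m = 1 := by
      rw [Nat.div_eq_sub_div hm (by omega), Nat.div_eq_of_lt (by omega)]
    omega
  have hexp : (m - k) * d = m * (d - q - 1) + (m - r) := by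
    have a1 : (m - k) * d = m * d - k * d := by rw [Nat.sub_mul]
    have a2 : m * (d - q - 1) = m * d - m * q - m := by
      rw [Nat.mul_sub, Nat.mul_sub, Nat.mul_one]
    have a3 : m * q + m ≤ m * d := by
      have h6 := Nat.mul_le_mul_left m (show q + 1 ≤ d from hqd)
      rw [Nat.mul_add, Nat.mul_one] at h6
      exact h6
    omega
  have hmk : hkf m d (m - k) = d - q := by
    unfold hkf
    have e : (m - k) * d + m - 1 = m * (d - q - 1) + (m - r + m - 1) := by omega
    rw [e, Nat.mul_add_div hm]
    have : (m - r + m - 1) / m = 1 := by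
      rw [Nat.div_eq_sub_div hm (by omega), Nat.div_eq_of_lt (by omega)]
    omega
  omega



/-- The vertex matrix entries. -/
def Vf (m d : ℕ) (i q : Fin d) : ℤ := if (q.val + d - i.val) % d < m then 1 else 0

section Cyclic

variable {m d : ℕ} [NeZero d]

open Fin.CommRing

lemma val_sub_eq (i q : Fin d) : (q.val + d - i.val) % d = (q - i).val := by
  rw [Fin.sub_def]
  congr 1
  omega

lemma Vf_eq (i q : Fin d) : Vf m d i q = if (q - i).val < m then 1 else 0 := by
  rw [Vf, val_sub_eq]

lemma window_pointwise (hmd : m < d) (i q : Fin d) :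
    Vf m d i q = ∑ r ∈ range m, (if i = q - (r : Fin d) then (1 : ℤ) else 0) := by
  rw [Vf_eq]
  have hcong : ∀ r ∈ range m, (if i = q - (r : Fin d) then (1 : ℤ) else 0)
      = if r = (q - i).val then (1 : ℤ) else 0 := by
    intro r hr
    simp only [mem_range] at hr
    congr 1
    have h1 : i = q - (r : Fin d) ↔ (r : Fin d) = q - i := by
      constructor
      · intro h; rw [h]; exact (sub_sub_cancel q (r : Fin d)).symm
      · intro h; rw [h, sub_sub_cancel]
    have h2 : (r : Fin d) = q - i ↔ r = (q - i).val := by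
      rw [Fin.ext_iff, Fin.val_natCast, Nat.mod_eq_of_lt (by omega)]
    rw [h1, h2]
  rw [Finset.sum_congr rfl hcong, Finset.sum_ite_eq' (range m) ((q - i).val)]
  simp [mem_range]

lemma window_sum (hmd : m < d) (f s : Fin d → ℝ)
    (hfs : ∀ q, f q = ∑ i, s i * ((Vf m d i q : ℤ) : ℝ)) (q : Fin d) :
    f q = ∑ r ∈ range m, s (q - (r : Fin d)) := by
  rw [hfs q]
  have h1 : ∀ i : Fin d, s i * ((Vf m d i q : ℤ) : ℝ)
      = ∑ r ∈ range m, (if i = q - (r : Fin d) then s i else 0) := by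
    intro i
    rw [window_pointwise hmd i q]
    push_cast
    rw [Finset.mul_sum]
    refine Finset.sum_congr rfl fun r _ => ?_
    split <;> simp
  rw [Finset.sum_congr rfl fun i _ => h1 i, Finset.sum_comm]
  refine Finset.sum_congr rfl fun r _ => ?_
  rw [Finset.sum_ite_eq' univ (q - (r : Fin d)) s]
  simp

lemma col_sum (hmd : m < d) (q : Fin d) :
    ∑ i, ((Vf m d i q : ℤ) : ℝ) = m := by
  have h1 : ∀ i : Fin d, ((Vf m d i q : ℤ) : ℝ)
      = ∑ r ∈ range m, (if i = q - (r : Fin d) then (1 : ℝ) else 0) := by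
    intro i
    rw [window_pointwise hmd i q]
    push_cast
    rfl
  rw [Finset.sum_congr rfl fun i _ => h1 i, Finset.sum_comm]
  have h2 : ∀ r ∈ range m,
      (∑ i : Fin d, if i = q - (r : Fin d) then (1 : ℝ) else 0) = 1 := by
    intro r _
    rw [Finset.sum_ite_eq' univ (q - (r : Fin d)) (fun _ => (1:ℝ))]
    simp
  rw [Finset.sum_congr rfl h2]
  simp

lemma diff_rel (hm : 0 < m) (hmd : m < d) (f s : Fin d → ℝ)
    (hfs : ∀ q, f q = ∑ i, s i * ((Vf m d i q : ℤ) : ℝ)) (q : Fin d) :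
    f (q + 1) - f q = s (q + 1) - s (q + 1 - (m : Fin d)) := by
  have h1 := window_sum hmd f s hfs (q + 1)
  have h2 := window_sum hmd f s hfs q
  set g : ℕ → ℝ := fun r => s (q + 1 - (r : Fin d)) with hg
  have e1 : f (q + 1) = ∑ r ∈ range m, g r := h1
  have e2 : f q = ∑ r ∈ range m, g (r + 1) := by
    rw [h2]
    refine Finset.sum_congr rfl fun r _ => ?_
    rw [hg]
    congr 1
    push_cast
    ring
  have e3 : ∑ r ∈ range (m + 1), g r = (∑ r ∈ range m, g (r + 1)) + g 0 :=
    Finset.sum_range_succ' g m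
  have e4 : ∑ r ∈ range (m + 1), g r = (∑ r ∈ range m, g r) + g m :=
    Finset.sum_range_succ g m
  have e5 : g 0 = s (q + 1) := by rw [hg]; norm_num
  have e6 : g m = s (q + 1 - (m : Fin d)) := rfl
  rw [e1, e2, ← e5, ← e6]
  linarith [e3, e4]

lemma gen_lemma (hd2 : 1 < d) (hcd : Nat.Coprime m d) (t : Fin d) :
    ∃ c : ℕ, ((c * m : ℕ) : Fin d) = t := by
  obtain ⟨e, -, he⟩ := Nat.exists_mul_mod_eq_one_of_coprime hcd hd2
  refine ⟨t.val * e, ?_⟩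
  have : (t.val * e * m) % d = t.val := by
    rw [mul_assoc, Nat.mul_mod, Nat.mod_eq_of_lt t.isLt, mul_comm e m, he, mul_one,
      Nat.mod_eq_of_lt t.isLt]
  rw [Fin.ext_iff, Fin.val_natCast, this]

lemma const_lemma (hd2 : 1 < d) (hcd : Nat.Coprime m d) (t : Fin d → ℝ)
    (ht : ∀ p : Fin d, t p = t (p - (m : Fin d))) (p p' : Fin d) : t p = t p' := by
  have aux : ∀ (c : ℕ) (p : Fin d), t p = t (p - ((c * m : ℕ) : Fin d)) := by
    intro c
    induction c with
    | zero => intro p; norm_num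
    | succ c ih =>
      intro p
      have e1 : (((c + 1) * m : ℕ) : Fin d) = ((c * m : ℕ) : Fin d) + (m : Fin d) := by
        push_cast
        ring
      rw [e1, ← sub_sub, ← ht (p - ((c * m : ℕ) : Fin d))]
      exact ih p
  obtain ⟨c, hc⟩ := gen_lemma hd2 hcd (p - p')
  have := aux c p
  rw [hc, sub_sub_cancel] at this
  exact this

lemma fract_const (hm : 0 < m) (hmd : m < d) (hcd : Nat.Coprime m d)
    (f s : Fin d → ℝ)
    (hfs : ∀ q, f q = ∑ i, s i * ((Vf m d i q : ℤ) : ℝ))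
    (hint : ∀ q : Fin d, ∃ z : ℤ, f (q + 1) - f q = z) :
    ∀ p : Fin d, Int.fract (s p) = Int.fract (s 0) := by
  have hd2 : 1 < d := by omega
  have ht : ∀ p : Fin d, Int.fract (s p) = Int.fract (s (p - (m : Fin d))) := by
    intro p
    have hq := diff_rel hm hmd f s hfs (p - 1)
    rw [sub_add_cancel] at hq
    obtain ⟨z, hz⟩ := hint (p - 1)
    rw [sub_add_cancel] at hz
    refine Int.fract_eq_fract.mpr ⟨z, ?_⟩
    rw [← hz, hq]
  intro p
  exact const_lemma hd2 hcd (fun p => Int.fract (s p)) ht p 0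

lemma structure_lemma (hm : 0 < m) (hmd : m < d) (hcd : Nat.Coprime m d)
    (x : Fin d → ℤ) (s : Fin d → ℝ) (hs0 : ∀ i, 0 ≤ s i)
    (hfs : ∀ q, ((x q : ℤ) : ℝ) = ∑ i, s i * ((Vf m d i q : ℤ) : ℝ)) :
    ∃ (k : ℕ) (a : Fin d → ℕ), k < m ∧ ∀ p, s p = a p + (k : ℝ) / m := by
  have hfr : ∀ p : Fin d, Int.fract (s p) = Int.fract (s 0) :=
    fract_const hm hmd hcd (fun q => ((x q : ℤ) : ℝ)) s hfs
      (fun q => ⟨x (q + 1) - x q, by push_cast; ring⟩)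
  -- window identity at 0
  have hw := window_sum hmd (fun q => ((x q : ℤ) : ℝ)) s hfs 0
  have hsplit : ∀ r ∈ range m, s (0 - (r : Fin d))
      = ((⌊s (0 - (r : Fin d))⌋ : ℤ) : ℝ) + Int.fract (s 0) := by
    intro r _
    rw [← hfr (0 - (r : Fin d))]
    exact (Int.floor_add_fract _).symm
  rw [Finset.sum_congr rfl hsplit, Finset.sum_add_distrib, Finset.sum_const,
    card_range, nsmul_eq_mul] at hw
  set B : ℤ := ∑ r ∈ range m, ⌊s (0 - (r : Fin d))⌋ with hB
  have hwB : ((x 0 : ℤ) : ℝ) = (B : ℝ) + m * Int.fract (s 0) := by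
    rw [hw, hB]
    push_cast
    ring
  set K : ℤ := x 0 - B with hK
  have hKfr : (K : ℝ) = m * Int.fract (s 0) := by
    rw [hK]
    push_cast
    linarith [hwB]
  have hfr0 : (0 : ℝ) ≤ Int.fract (s 0) := Int.fract_nonneg _
  have hfr1 : Int.fract (s 0) < 1 := Int.fract_lt_one _
  have hK0 : (0 : ℤ) ≤ K := by
    have : (0 : ℝ) ≤ (K : ℝ) := by
      rw [hKfr]; positivity
    exact_mod_cast this
  have hKm : K < m := by
    have : (K : ℝ) < m := by
      rw [hKfr]
      calc (m : ℝ) * Int.fract (s 0) < m * 1 := by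
            apply mul_lt_mul_of_pos_left hfr1
            exact_mod_cast hm
        _ = m := mul_one _
    exact_mod_cast this
  refine ⟨K.toNat, fun p => (⌊s p⌋).toNat, by omega, fun p => ?_⟩
  have hfl : (0 : ℤ) ≤ ⌊s p⌋ := Int.floor_nonneg.mpr (hs0 p)
  have hfrac : Int.fract (s p) = (K.toNat : ℝ) / m := by
    rw [hfr p]
    have hm' : (m : ℝ) ≠ 0 := by positivity
    rw [eq_div_iff hm', mul_comm, ← hKfr]
    congr 1
    omega
  have := Int.floor_add_fract (s p)
  rw [hfrac] at this
  rw [← this]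
  congr 1
  exact_mod_cast (Int.toNat_of_nonneg hfl).symm

lemma uniqueness_lemma (hm : 0 < m) (hmd : m < d) (hcd : Nat.Coprime m d)
    (s s' : Fin d → ℝ)
    (h : ∀ q, ∑ i, s i * ((Vf m d i q : ℤ) : ℝ) = ∑ i, s' i * ((Vf m d i q : ℤ) : ℝ)) :
    s = s' := by
  have hd2 : 1 < d := by omega
  set t : Fin d → ℝ := fun i => s i - s' i with htdef
  have hfs : ∀ q, (0 : ℝ) = ∑ i, t i * ((Vf m d i q : ℤ) : ℝ) := by
    intro q
    simp only [htdef, sub_mul, Finset.sum_sub_distrib]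
    rw [h q]
    ring
  have hdiff : ∀ q : Fin d, t (q + 1) - t (q + 1 - (m : Fin d)) = 0 := by
    intro q
    have := diff_rel hm hmd (fun _ => (0:ℝ)) t hfs q
    simpa using this.symm
  have ht : ∀ p : Fin d, t p = t (p - (m : Fin d)) := by
    intro p
    have := hdiff (p - 1)
    rw [sub_add_cancel] at this
    linarith
  have hconst : ∀ p p' : Fin d, t p = t p' := const_lemma hd2 hcd t ht
  have hwin := window_sum hmd (fun _ => (0:ℝ)) t hfs 0
  have hzero : t 0 = 0 := by
    have hsum : ∀ r ∈ range m, t (0 - (r : Fin d)) = t 0 := fun r _ => hconst _ _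
    rw [Finset.sum_congr rfl hsum, Finset.sum_const, card_range, nsmul_eq_mul] at hwin
    have hm' : (m : ℝ) ≠ 0 := by positivity
    have h0 : (m : ℝ) * t 0 = 0 := hwin.symm
    exact (mul_eq_zero.mp h0).resolve_left hm'
  funext p
  have : t p = 0 := (hconst p 0).trans hzero
  rw [htdef] at this
  simp only at this
  linarith

lemma memP_iff (hmd : m < d) (P : Set (Fin d → ℝ))
    (hP : P = convexHull ℝ
      ({0} ∪ Set.range fun i : Fin d => fun q => ((Vf m d i q : ℤ) : ℝ)))
    (y : Fin d → ℝ) :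
    y ∈ P ↔ ∃ s : Fin d → ℝ, (∀ i, 0 ≤ s i) ∧ (∑ i, s i) ≤ 1 ∧
      ∀ q, y q = ∑ i, s i * ((Vf m d i q : ℤ) : ℝ) := by
  set w : Fin d → (Fin d → ℝ) := fun i q => ((Vf m d i q : ℤ) : ℝ) with hw
  set Q : Set (Fin d → ℝ) := {y | ∃ s : Fin d → ℝ, (∀ i, 0 ≤ s i) ∧ (∑ i, s i) ≤ 1 ∧
      ∀ q, y q = ∑ i, s i * w i q} with hQ
  constructor
  · intro hy
    have hsub : P ⊆ Q := by
      rw [hP]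
      apply convexHull_min
      · rintro z (hz | ⟨i0, rfl⟩)
        · refine ⟨0, fun i => le_rfl, by simp, fun q => ?_⟩
          simp only [Set.mem_singleton_iff] at hz
          simp [hz]
        · refine ⟨fun i => if i = i0 then 1 else 0,
            fun i => by dsimp only; split <;> norm_num, ?_, fun q => ?_⟩
          · rw [Finset.sum_ite_eq' univ i0 (fun _ => (1:ℝ))]
            simp
          · have : ∀ i : Fin d, (if i = i0 then (1:ℝ) else 0) * w i q
                = if i = i0 then w i q else 0 := by
              intro i; split <;> simp
            rw [Finset.sum_congr rfl fun i _ => this i,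
              Finset.sum_ite_eq' univ i0 (fun i => w i q)]
            simp
      · rintro y1 hy1 y2 hy2 a b ha hb hab
        obtain ⟨s1, hs1n, hs1s, hs1e⟩ := hy1
        obtain ⟨s2, hs2n, hs2s, hs2e⟩ := hy2
        refine ⟨fun i => a * s1 i + b * s2 i,
          fun i => add_nonneg (mul_nonneg ha (hs1n i)) (mul_nonneg hb (hs2n i)), ?_, fun q => ?_⟩
        · rw [Finset.sum_add_distrib, ← Finset.mul_sum, ← Finset.mul_sum]
          calc a * ∑ i, s1 i + b * ∑ i, s2 i ≤ a * 1 + b * 1 := by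
                gcongr
            _ = 1 := by rw [mul_one, mul_one, hab]
        · have : (a • y1 + b • y2) q = a * y1 q + b * y2 q := rfl
          rw [this, hs1e q, hs2e q, Finset.mul_sum, Finset.mul_sum,
            ← Finset.sum_add_distrib]
          refine Finset.sum_congr rfl fun i _ => by ring
    exact hsub hy
  · rintro ⟨s, hsn, hss, hse⟩
    rw [hP]
    have hmem := Finset.centerMass_mem_convexHull (univ : Finset (Fin (d + 1)))
      (w := Fin.cons (1 - ∑ i, s i) s)
      (z := Fin.cons 0 w)
      (s := {0} ∪ Set.range w)
      (fun i _ => by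
        induction i using Fin.cases with
        | zero => simp only [Fin.cons_zero]; linarith
        | succ i => simp only [Fin.cons_succ]; exact hsn i)
      (by
        rw [Fin.sum_cons]
        norm_num)
      (fun i _ => by
        induction i using Fin.cases with
        | zero => exact Or.inl (by simp)
        | succ i => exact Or.inr ⟨i, by simp⟩)
    rw [Finset.centerMass_eq_of_sum_1 _ _ (by rw [Fin.sum_cons]; ring)] at hmem
    convert hmem using 1
    funext q
    rw [Fin.sum_univ_succ]
    simp only [Fin.cons_zero, Fin.cons_succ, smul_zero, zero_add]
    rw [hse q]
    rw [Finset.sum_apply]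
    rfl

lemma mem_latticeJP (hmd : m < d) (P : Set (Fin d → ℝ))
    (hP : P = convexHull ℝ
      ({0} ∪ Set.range fun i : Fin d => fun q => ((Vf m d i q : ℤ) : ℝ)))
    (j : ℕ) (x : Fin d → ℤ) :
    x ∈ latticePoints ((j : ℝ) • P) ↔ ∃ s : Fin d → ℝ, (∀ i, 0 ≤ s i) ∧
      (∑ i, s i) ≤ (j : ℝ) ∧ ∀ q, ((x q : ℤ) : ℝ) = ∑ i, s i * ((Vf m d i q : ℤ) : ℝ) := by
  have hPne : P.Nonempty := by
    refine ⟨0, ?_⟩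
    rw [hP]
    exact subset_convexHull ℝ _ (Or.inl rfl)
  rcases Nat.eq_zero_or_pos j with hj | hj
  · subst hj
    rw [Nat.cast_zero, Set.zero_smul_set hPne]
    simp only [latticePoints, Set.mem_setOf_eq, Set.mem_singleton_iff]
    constructor
    · intro h
      refine ⟨0, fun i => le_rfl, by simp, fun q => ?_⟩
      have := congrFun h q
      simp [this]
    · rintro ⟨s, hsn, hss, hse⟩
      have hz : ∀ i, s i = 0 := by
        intro i
        have h1 : ∑ i, s i = 0 := le_antisymm hss (Finset.sum_nonneg fun i _ => hsn i)
        have := (Finset.sum_eq_zero_iff_of_nonneg (fun i _ => hsn i)).mp h1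
        exact this i (mem_univ i)
      funext q
      have := hse q
      simp only [hz, zero_mul, Finset.sum_const_zero] at this
      exact this
  · have hjR : (0 : ℝ) < j := by exact_mod_cast hj
    rw [latticePoints, Set.mem_setOf_eq,
      Set.mem_smul_set_iff_inv_smul_mem₀ (ne_of_gt hjR)]
    rw [memP_iff hmd P hP]
    constructor
    · rintro ⟨s', hsn, hss, hse⟩
      refine ⟨fun i => (j : ℝ) * s' i, fun i => mul_nonneg hjR.le (hsn i), ?_, fun q => ?_⟩
      · rw [← Finset.mul_sum]
        calc (j:ℝ) * ∑ i, s' i ≤ (j:ℝ) * 1 := by gcongr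
          _ = j := mul_one _
      · have := hse q
        simp only [Pi.smul_apply, smul_eq_mul] at this
        have h2 : ((x q : ℤ) : ℝ) = (j : ℝ) * ((j : ℝ)⁻¹ * ((x q : ℤ) : ℝ)) := by
          field_simp
        rw [h2, this, Finset.mul_sum]
        refine Finset.sum_congr rfl fun i _ => by ring
    · rintro ⟨s, hsn, hss, hse⟩
      refine ⟨fun i => (j : ℝ)⁻¹ * s i, fun i => mul_nonneg (inv_nonneg.mpr hjR.le) (hsn i), ?_, fun q => ?_⟩
      · rw [← Finset.mul_sum]
        calc (j:ℝ)⁻¹ * ∑ i, s i ≤ (j:ℝ)⁻¹ * j := by gcongr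
          _ = 1 := inv_mul_cancel₀ (ne_of_gt hjR)
      · simp only [Pi.smul_apply, smul_eq_mul]
        rw [hse q, Finset.mul_sum]
        refine Finset.sum_congr rfl fun i _ => by ring

lemma weight_eq (hm : 0 < m) (hmd : m < d) (k : ℕ) (a : Fin d → ℕ) (q : Fin d) :
    ∑ i, (((a i : ℝ) + (k : ℝ) / m) * ((Vf m d i q : ℤ) : ℝ))
      = (∑ i, (a i : ℝ) * ((Vf m d i q : ℤ) : ℝ)) + k := by
  have hmR : (m : ℝ) ≠ 0 := by positivity
  have h1 : ∀ i : Fin d, ((a i : ℝ) + (k : ℝ) / m) * ((Vf m d i q : ℤ) : ℝ)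
      = (a i : ℝ) * ((Vf m d i q : ℤ) : ℝ) + ((k : ℝ) / m) * ((Vf m d i q : ℤ) : ℝ) := by
    intro i; ring
  rw [Finset.sum_congr rfl fun i _ => h1 i, Finset.sum_add_distrib, ← Finset.mul_sum,
    col_sum hmd q, div_mul_cancel₀ _ hmR]

lemma weight_sum (hm : 0 < m) (k : ℕ) (a : Fin d → ℕ) :
    ∑ i, ((a i : ℝ) + (k : ℝ) / m)
      = ((∑ i, a i : ℕ) : ℝ) + (d : ℝ) * ((k : ℝ) / m) := by
  rw [Finset.sum_add_distrib, Finset.sum_const, Finset.card_univ, Fintype.card_fin,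
    nsmul_eq_mul]
  push_cast
  ring

lemma ehrhart_formula (hm : 0 < m) (hmd : m < d) (hcd : Nat.Coprime m d)
    (P : Set (Fin d → ℝ))
    (hP : P = convexHull ℝ
      ({0} ∪ Set.range fun i : Fin d => fun q => ((Vf m d i q : ℤ) : ℝ)))
    (j : ℕ) :
    ehrhart P j = ∑ k ∈ range m, (((j + d - hkf m d k).choose d : ℕ) : ℤ) := by
  have hd0 : 0 < d := by omega
  have hmR : (0 : ℝ) < m := by exact_mod_cast hm
  classical
  set Dfin : Finset ((_ : ℕ) × (Fin d → ℕ)) := (range m).sigma (fun k =>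
    (Fintype.piFinset fun _ : Fin d => range (j + 1)).filter
      fun a => (∑ i, a i) + hkf m d k ≤ j) with hDfin
  set Φ : ((_ : ℕ) × (Fin d → ℕ)) → (Fin d → ℤ) :=
    fun p q => (∑ i, (p.2 i : ℤ) * Vf m d i q) + p.1 with hΦ
  -- the real weights associated to a pair
  have hsw : ∀ (p : ((_ : ℕ) × (Fin d → ℕ))) (q : Fin d),
      ((Φ p q : ℤ) : ℝ) = ∑ i, (((p.2 i : ℝ) + (p.1 : ℝ) / m) * ((Vf m d i q : ℤ) : ℝ)) := by
    intro p q
    show (((∑ i, (p.2 i : ℤ) * Vf m d i q) + (p.1 : ℤ) : ℤ) : ℝ) = _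
    rw [weight_eq hm hmd]
    push_cast
    ring
  -- set equality
  have hset : latticePoints ((j : ℝ) • P) = ↑(Dfin.image Φ) := by
    ext x
    rw [Finset.coe_image, Set.mem_image, mem_latticeJP hmd P hP j x]
    constructor
    · rintro ⟨s, hsn, hss, hse⟩
      obtain ⟨k, a, hkm, hsa⟩ := structure_lemma hm hmd hcd x s hsn hse
      -- the real sum bound transfers to ℕ
      have hSsum : ∑ i, s i = ((∑ i, a i : ℕ) : ℝ) + (d : ℝ) * ((k : ℝ) / m) := by
        rw [Finset.sum_congr rfl fun i _ => hsa i]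
        exact weight_sum hm k a
      have hnat : m * (∑ i, a i) + k * d ≤ m * j := by
        have h2 : (m : ℝ) * (((∑ i, a i : ℕ) : ℝ) + (d : ℝ) * ((k : ℝ) / m))
            ≤ (m : ℝ) * j := by
          rw [← hSsum]
          exact mul_le_mul_of_nonneg_left hss hmR.le
        have h3 : (m : ℝ) * (((∑ i, a i : ℕ) : ℝ) + (d : ℝ) * ((k : ℝ) / m))
            = ((m * (∑ i, a i) + k * d : ℕ) : ℝ) := by
          push_cast
          field_simp
        rw [h3] at h2
        exact_mod_cast h2
      have hkb : (∑ i, a i) + hkf m d k ≤ j := by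
        have e1 := hkf_le_mul m d k hm
        have e2 : m * ((∑ i, a i) + hkf m d k) = m * (∑ i, a i) + m * hkf m d k :=
          Nat.mul_add m _ _
        have e3 : m * (j + 1) = m * j + m := by rw [Nat.mul_add, Nat.mul_one]
        have hlt : m * ((∑ i, a i) + hkf m d k) < m * (j + 1) := by omega
        exact Nat.lt_succ_iff.mp (Nat.lt_of_mul_lt_mul_left hlt)
      refine ⟨⟨k, a⟩, ?_, ?_⟩
      · rw [Finset.mem_coe, hDfin, Finset.mem_sigma]
        have hbound : ∀ i, a i < j + 1 := by
          intro i
          have hii : a i ≤ ∑ i, a i :=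
            Finset.single_le_sum (fun i _ => Nat.zero_le _) (mem_univ i)
          omega
        exact ⟨Finset.mem_range.mpr hkm, Finset.mem_filter.mpr
          ⟨Fintype.mem_piFinset.mpr fun i => Finset.mem_range.mpr (hbound i), hkb⟩⟩
      · funext q
        have hcast : ((Φ ⟨k, a⟩ q : ℤ) : ℝ) = ((x q : ℤ) : ℝ) := by
          rw [hsw ⟨k, a⟩ q, hse q]
          refine (Finset.sum_congr rfl fun i _ => ?_).symm
          rw [hsa i]
        exact_mod_cast hcast
    · rintro ⟨p, hp, rfl⟩
      have hp' := hp
      rw [hDfin, Finset.mem_coe, Finset.mem_sigma, Finset.mem_filter,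
        Fintype.mem_piFinset] at hp'
      obtain ⟨hk, _, hab⟩ := hp'
      rw [Finset.mem_range] at hk
      refine ⟨fun i => (p.2 i : ℝ) + (p.1 : ℝ) / m,
        fun i => add_nonneg (Nat.cast_nonneg _) (div_nonneg (Nat.cast_nonneg _) hmR.le),
        ?_, fun q => hsw p q⟩
      rw [weight_sum hm]
      have e1 := hkf_mul_le m d p.1 hm
      have e2 : m * ((∑ i, p.2 i) + hkf m d p.1) ≤ m * j := Nat.mul_le_mul_left m hab
      have e3 : m * ((∑ i, p.2 i) + hkf m d p.1)
          = m * (∑ i, p.2 i) + m * hkf m d p.1 := Nat.mul_add m _ _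
      have hnat : m * (∑ i, p.2 i) + p.1 * d ≤ m * j := by omega
      have hr : ((m * (∑ i, p.2 i) + p.1 * d : ℕ) : ℝ) ≤ ((m * j : ℕ) : ℝ) := by
        exact_mod_cast hnat
      rw [← mul_le_mul_iff_of_pos_left hmR]
      calc (m : ℝ) * (((∑ i, p.2 i : ℕ) : ℝ) + (d : ℝ) * ((p.1 : ℝ) / m))
          = ((m * (∑ i, p.2 i) + p.1 * d : ℕ) : ℝ) := by
            push_cast
            field_simp
        _ ≤ ((m * j : ℕ) : ℝ) := hr
        _ = (m : ℝ) * j := by push_cast; ring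
  -- injectivity
  have hinj : Set.InjOn Φ ↑Dfin := by
    intro p hp p' hp' hpe
    have hsv : ∀ q, ∑ i, (((p.2 i : ℝ) + (p.1 : ℝ) / m) * ((Vf m d i q : ℤ) : ℝ))
        = ∑ i, (((p'.2 i : ℝ) + (p'.1 : ℝ) / m) * ((Vf m d i q : ℤ) : ℝ)) := by
      intro q
      rw [← hsw p q, ← hsw p' q, hpe]
    have hs := uniqueness_lemma hm hmd hcd _ _ hsv
    rw [hDfin, Finset.mem_coe, Finset.mem_sigma, Finset.mem_range] at hp hp'
    have hfr : ∀ (c : ℕ) (b : Fin d → ℕ), c < m →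
        Int.fract ((b 0 : ℝ) + (c : ℝ) / m) = (c : ℝ) / m := by
      intro c b hc
      have : ((b 0 : ℝ) : ℝ) = (((b 0 : ℕ) : ℤ) : ℝ) := by push_cast; ring
      rw [this, Int.fract_intCast_add, Int.fract_eq_self.mpr
        ⟨div_nonneg (Nat.cast_nonneg _) hmR.le, by
          rw [div_lt_one hmR]
          exact_mod_cast hc⟩]
    have h0 := congrFun hs 0
    have hquot : (p.1 : ℝ) / m = (p'.1 : ℝ) / m := by
      rw [← hfr p.1 p.2 hp.1, ← hfr p'.1 p'.2 hp'.1, h0]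
    have hk : p.1 = p'.1 := by
      have : (p.1 : ℝ) = (p'.1 : ℝ) := by
        field_simp at hquot
        exact_mod_cast hquot
      exact_mod_cast this
    have ha : p.2 = p'.2 := by
      funext i
      have := congrFun hs i
      rw [hquot] at this
      have hcast : (p.2 i : ℝ) = (p'.2 i : ℝ) := by linarith
      exact_mod_cast hcast
    exact Sigma.ext hk (heq_of_eq ha)
  -- count
  rw [ehrhart, hset, Set.ncard_coe_finset, Finset.card_image_of_injOn hinj, hDfin,
    Finset.card_sigma]
  rw [Finset.sum_congr rfl fun k _ => card_slice d j (hkf m d k) hd0]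
  push_cast
  rfl

end Cyclic

end

theorem stmt13 (m n d : ℕ) (hm : 0 < m) (hn : 0 < n) (hd : d = m + n)
    (hgcd : Nat.gcd m n = 1)
    (v : Fin d → Fin d → ℤ)
    (hv : ∀ i j : Fin d, v i j = if (j.val + d - i.val) % d < m then 1 else 0)
    (P : Set (Fin d → ℝ))
    (hP : P = convexHull ℝ
      ({0} ∪ Set.range fun i : Fin d => fun j => ((v i j : ℤ) : ℝ))) :
    ∀ i ≤ (d - 1) / 2, deltaVec P d (d - i) = deltaVec P d (i + 1) := by
  intro i hi
  haveI : NeZero d := ⟨by omega⟩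
  have hmd : m < d := by omega
  have hd0 : 0 < d := by omega
  have hcd : Nat.Coprime m d := by
    rw [hd, add_comm]
    exact Nat.coprime_add_self_right.mpr hgcd
  have hveq : (fun i : Fin d => fun q : Fin d => ((v i q : ℤ) : ℝ))
      = (fun i q => ((Vf m d i q : ℤ) : ℝ)) := by
    funext i q
    rw [hv i q]
    rfl
  have hP' : P = convexHull ℝ
      ({0} ∪ Set.range fun i : Fin d => fun q => ((Vf m d i q : ℤ) : ℝ)) := by
    rw [hP, hveq]
  have hEF : ∀ j, ehrhart P j
      = ∑ k ∈ Finset.range m, (((j + d - hkf m d k).choose d : ℕ) : ℤ) :=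
    ehrhart_formula hm hmd hcd P hP'
  have hdelta : ∀ i0 : ℕ, deltaVec P d i0
      = (((Finset.range m).filter fun k => i0 = hkf m d k).card : ℤ) := by
    intro i0
    rw [deltaVec, Finset.sum_congr rfl fun j _ => by rw [hEF j]]
    have h1 : ∀ j ∈ Finset.range (i0 + 1),
        (-1 : ℤ) ^ (i0 - j) * ((d + 1).choose (i0 - j) : ℤ) *
          (∑ k ∈ Finset.range m, (((j + d - hkf m d k).choose d : ℕ) : ℤ))
        = ∑ k ∈ Finset.range m, (-1 : ℤ) ^ (i0 - j) * ((d + 1).choose (i0 - j) : ℤ) *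
            (((j + d - hkf m d k).choose d : ℕ) : ℤ) := fun j _ => by
      rw [Finset.mul_sum]
    rw [Finset.sum_congr rfl h1, Finset.sum_comm,
      Finset.sum_congr rfl fun k hk =>
        key_identity d (hkf m d k) i0 (hkf_le m d k hm (Finset.mem_range.mp hk)),
      Finset.sum_boole]
  rw [hdelta, hdelta]
  have h2i : 2 * i ≤ d - 1 := by
    have := (Nat.le_div_iff_mul_le (by norm_num : 0 < 2)).mp hi
    omega
  congr 1
  refine Finset.card_bij' (fun k _ => m - k) (fun k _ => m - k) ?_ ?_ ?_ ?_
  · intro a ha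
    rw [Finset.mem_filter, Finset.mem_range] at ha ⊢
    obtain ⟨ham, hav⟩ := ha
    have ha0 : 0 < a := by
      rcases Nat.eq_zero_or_pos a with h | h
      · rw [h, hkf_zero m d hm] at hav; omega
      · exact h
    have hp := hkf_pair m d a hm hd0 hcd ha0 ham
    have hle := hkf_le m d a hm ham
    refine ⟨show m - a < m by omega, ?_⟩
    show i + 1 = hkf m d (m - a)
    rw [hp]
    omega
  · intro b hb
    rw [Finset.mem_filter, Finset.mem_range] at hb ⊢
    obtain ⟨hbm, hbv⟩ := hb
    have hb0 : 0 < b := by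
      rcases Nat.eq_zero_or_pos b with h | h
      · rw [h, hkf_zero m d hm] at hbv; omega
      · exact h
    have hp := hkf_pair m d b hm hd0 hcd hb0 hbm
    have hle := hkf_le m d b hm hbm
    refine ⟨show m - b < m by omega, ?_⟩
    show d - i = hkf m d (m - b)
    rw [hp]
    omega
  · intro a ha
    rw [Finset.mem_filter, Finset.mem_range] at ha
    obtain ⟨ham, hav⟩ := ha
    have ha0 : 0 < a := by
      rcases Nat.eq_zero_or_pos a with h | h
      · rw [h, hkf_zero m d hm] at hav; omega
      · exact h
    show m - (m - a) = a
    omega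
  · intro b hb
    rw [Finset.mem_filter, Finset.mem_range] at hb
    obtain ⟨hbm, hbv⟩ := hb
    have hb0 : 0 < b := by
      rcases Nat.eq_zero_or_pos b with h | h
      · rw [h, hkf_zero m d hm] at hbv; omega
      · exact h
    show m - (m - b) = b
    omega
end
end

section
/- Suppose (δ_0,...,δ_d) is a (0,1)-sequence with δ_0 = 1 and exactly four entries equal to 1, at positions 0 < m_1 < m_2 < m_3 ≤ d. Set p_1 = m_1 − 1, p_2 = m_2 − m_1 − 1, p_3 = m_3 − m_2 − 1, p_4 = d − m_3. If the sequence is shifted symmetric (δ_{i+1} = δ_{d−i} for 0 ≤ i ≤ ⌊(d−1)/2⌋) and satisfies the Stanley inequalities, then p_1 = p_4, p_2 = p_3, p_1 ≥ p_2 ≥ 0, and 2p_1 + 2p_2 = d − 3. -/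
open scoped BigOperators Pointwise

noncomputable section

theorem stmt16 (d m1 m2 m3 : ℕ) (h1 : 0 < m1) (h12 : m1 < m2) (h23 : m2 < m3)
    (h3d : m3 ≤ d) (δ : ℕ → ℕ) (h01 : ∀ i, δ i ≤ 1)
    (hones : ∀ i, δ i = 1 ↔ i = 0 ∨ i = m1 ∨ i = m2 ∨ i = m3)
    (hss : ∀ i ≤ (d - 1) / 2, δ (d - i) = δ (i + 1))
    (hstanley : ∀ i ≤ m3 / 2,
      ∑ j ∈ Finset.range (i + 1), δ j ≤ ∑ j ∈ Finset.range (i + 1), δ (m3 - j)) :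
    m1 - 1 = d - m3 ∧ m2 - m1 - 1 = m3 - m2 - 1 ∧ m2 - m1 - 1 ≤ m1 - 1 ∧
      2 * (m1 - 1) + 2 * (m2 - m1 - 1) = d - 3 := by
  have hδ0 : δ 0 = 1 := (hones 0).mpr (Or.inl rfl)
  have hδ1 : δ m1 = 1 := (hones m1).mpr (Or.inr (Or.inl rfl))
  have hδ3 : δ m3 = 1 := (hones m3).mpr (Or.inr (Or.inr (Or.inr rfl)))
  have sym : ∀ j, 1 ≤ j → j ≤ d → δ j = δ (d + 1 - j) := by
    intro j hj1 hjd
    rcases le_or_gt (j - 1) ((d - 1) / 2) with h | h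
    · have hthis := hss (j - 1) h
      have e1 : d - (j - 1) = d + 1 - j := by omega
      have e2 : j - 1 + 1 = j := by omega
      rw [e1, e2] at hthis
      exact hthis.symm
    · have hdj : d - j ≤ (d - 1) / 2 := by omega
      have hthis := hss (d - j) hdj
      have e1 : d - (d - j) = j := by omega
      have e2 : d - j + 1 = d + 1 - j := by omega
      rw [e1, e2] at hthis
      exact hthis
  have mem : ∀ j, 1 ≤ j → j ≤ d → δ j = 1 → (j = m1 ∨ j = m2 ∨ j = m3) := by
    intro j hj1 hjd h
    have := (hones j).mp h
    omega
  have ha : d + 1 - m3 = m1 ∨ d + 1 - m3 = m2 ∨ d + 1 - m3 = m3 := by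
    apply mem _ (by omega) (by omega)
    rw [← sym m3 (by omega) h3d]; exact hδ3
  have hb : d + 1 - m2 = m1 ∨ d + 1 - m2 = m2 ∨ d + 1 - m2 = m3 := by
    apply mem _ (by omega) (by omega)
    rw [← sym m2 (by omega) (by omega)]
    exact (hones m2).mpr (Or.inr (Or.inr (Or.inl rfl)))
  have hc : d + 1 - m1 = m1 ∨ d + 1 - m1 = m2 ∨ d + 1 - m1 = m3 := by
    apply mem _ (by omega) (by omega)
    rw [← sym m1 h1 (by omega)]; exact hδ1
  have key : m1 + m3 = d + 1 ∧ 2 * m2 = d + 1 := by omega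
  have hle : m3 - m2 ≤ m1 := by
    by_contra hcon
    push_neg at hcon
    set i := m3 - m2 - 1 with hi
    have hi2 : i ≤ m3 / 2 := by omega
    have hst := hstanley i hi2
    have hL : 2 ≤ ∑ j ∈ Finset.range (i + 1), δ j := by
      have hsub : ({0, m1} : Finset ℕ) ⊆ Finset.range (i + 1) := by
        intro x hx
        simp only [Finset.mem_insert, Finset.mem_singleton] at hx
        rcases hx with rfl | rfl <;> simp only [Finset.mem_range] <;> omega
      calc (2 : ℕ) = ∑ j ∈ ({0, m1} : Finset ℕ), δ j := by
            rw [Finset.sum_pair (by omega)]; omega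
        _ ≤ _ := Finset.sum_le_sum_of_subset hsub
    have hR : ∑ j ∈ Finset.range (i + 1), δ (m3 - j) = 1 := by
      rw [Finset.sum_eq_single_of_mem 0 (by simp)]
      · simpa using hδ3
      · intro j hj hj0
        simp only [Finset.mem_range] at hj
        have hne : ¬(δ (m3 - j) = 1) := by
          rw [hones]; omega
        have := h01 (m3 - j); omega
    omega
  refine ⟨by omega, by omega, by omega, by omega⟩
end
end

section
/- For every k ≥ 0 and l ≥ 1, with d' = 4k + 4 + 3l, there exists an integral simplex P ⊂ R^{d'} of dimension d' whose δ-vector is (1, 0^{k+l}, 1, 0^k, 1, 0^{k+l}, 1, 0^k, 1, 0^{k+l}) ∈ Z^{d'+1}, where 0^j denotes j consecutive zeros. -/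
open scoped BigOperators Pointwise

noncomputable section

section Aux
open Finset

def GG (n D m : ℕ) : ℤ := ∑ r ∈ range (m+1), (-1:ℤ)^r * (n.choose r) * ((m - r + D).choose D)

lemma GG_zero_m (n D : ℕ) : GG n D 0 = 1 := by simp [GG]

lemma GG_zero (D m : ℕ) : GG 0 D m = ((m + D).choose D) := by
  rw [GG, Finset.sum_eq_single 0]
  · simp
  · intro r _ hr
    rcases Nat.exists_eq_succ_of_ne_zero hr with ⟨r', rfl⟩
    simp [Nat.choose]
  · simp

lemma GG_succ (n D m : ℕ) : GG (n+1) D (m+1) = GG n D (m+1) - GG n D m := by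
  have e1 : ∀ r ∈ range (m+1), (-1:ℤ)^(r+1) * ((n+1).choose (r+1)) * ((m+1 - (r+1) + D).choose D)
      = (-1:ℤ)^(r+1) * (n.choose (r+1)) * ((m+1 - (r+1) + D).choose D)
        + (-((-1:ℤ)^r * (n.choose r) * ((m - r + D).choose D))) := by
    intro r _
    have h2 : m + 1 - (r+1) = m - r := by omega
    rw [Nat.choose_succ_succ, h2]
    push_cast; ring
  rw [GG, Finset.sum_range_succ' _ (m+1), Finset.sum_congr rfl e1, Finset.sum_add_distrib,
    Finset.sum_neg_distrib]
  have e2 : GG n D (m+1) = (∑ r ∈ range (m+1), (-1:ℤ)^(r+1) * (n.choose (r+1)) * ((m+1 - (r+1) + D).choose D)) + (-1:ℤ)^0 * (n.choose 0) * ((m+1-0+D).choose D) := by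
    rw [GG, Finset.sum_range_succ' _ (m+1)]
  rw [e2, GG]
  simp only [pow_zero, Nat.choose_zero_right, Nat.cast_one, mul_one, one_mul, Nat.sub_zero]
  ring

lemma GG_le (D : ℕ) : ∀ n ≤ D, ∀ m, GG n D m = ((m + (D - n)).choose (D - n)) := by
  intro n
  induction n with
  | zero => intro _ m; simpa using GG_zero D m
  | succ n ih =>
    intro hn m
    induction m with
    | zero => rw [GG_zero_m]; simp
    | succ m ihm =>
      rw [GG_succ, ih (by omega) (m+1), ih (by omega) m]
      have h5 : D - n = (D - (n+1)) + 1 := by omega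
      rw [h5]
      have h6 : m + 1 + (D-(n+1)+1) = (m+1+(D-(n+1))) + 1 := by omega
      have h7 : m + (D-(n+1)+1) = (m+1+(D-(n+1))) := by omega
      rw [h6, h7, Nat.choose_succ_succ (m+1+(D-(n+1)))]
      push_cast; ring

lemma GG_diag (D m : ℕ) : GG (D+1) D m = if m = 0 then 1 else 0 := by
  cases m with
  | zero => simp [GG_zero_m]
  | succ m =>
    rw [GG_succ, GG_le D D le_rfl, GG_le D D le_rfl]
    simp


def Fb (m M : ℕ) : Finset (Fin m → ℕ) :=
  (Fintype.piFinset fun _ => range (M+1)).filter fun g => ∑ i, g i ≤ M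

lemma mem_Fb {m M : ℕ} (g : Fin m → ℕ) : g ∈ Fb m M ↔ ∑ i, g i ≤ M := by
  simp only [Fb, mem_filter, Fintype.mem_piFinset, mem_range, and_iff_right_iff_imp]
  intro hs i
  have := Finset.single_le_sum (f := g) (fun i _ => Nat.zero_le _) (Finset.mem_univ i)
  omega

lemma Fb_succ (m M : ℕ) :
    Fb (m+1) M = (range (M+1)).biUnion fun j => (Fb m (M-j)).image (fun g => Fin.snoc g j) := by
  ext g
  simp only [mem_Fb, mem_biUnion, mem_range, mem_image]
  constructor
  · intro hg
    have hsum := Fin.sum_univ_castSucc (f := g)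
    refine ⟨g (Fin.last m), by omega, Fin.init g, ?_, Fin.snoc_init_self g⟩
    have : ∑ i : Fin m, Fin.init g i = ∑ i : Fin m, g i.castSucc := rfl
    omega
  · rintro ⟨j, hj, g', hg', rfl⟩
    rw [Fin.sum_univ_castSucc]
    simp only [Fin.snoc_castSucc, Fin.snoc_last]
    omega

lemma card_Fb : ∀ m M, (Fb m M).card = (M + m).choose m := by
  intro m
  induction m with
  | zero =>
    intro M
    rw [Nat.choose_zero_right]
    apply Finset.card_eq_one.2
    exact ⟨(fun i => i.elim0), by ext g; simp [mem_Fb, Finset.mem_singleton]; ext i; exact i.elim0⟩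
  | succ m ih =>
    intro M
    have hdisj : ∀ x ∈ range (M+1), ∀ y ∈ range (M+1), x ≠ y →
        Disjoint ((Fb m (M-x)).image (fun g => (Fin.snoc g x : Fin (m+1) → ℕ)))
          ((Fb m (M-y)).image (fun g => (Fin.snoc g y : Fin (m+1) → ℕ))) := by
      intro a _ b _ hab
      simp only [Finset.disjoint_left, mem_image]
      rintro x ⟨g, _, rfl⟩ ⟨g', _, he⟩
      have := congrFun he (Fin.last m)
      simp only [Fin.snoc_last] at this
      exact hab this.symm
    rw [Fb_succ, Finset.card_biUnion hdisj]
    have hc : ∀ j ∈ range (M+1), ((Fb m (M-j)).image (fun g => (Fin.snoc g j : Fin (m+1) → ℕ))).card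
        = (fun i => (i + m).choose m) ((M+1) - 1 - j) := by
      intro j hj
      rw [Finset.card_image_of_injective _ (fun a b hab => by
        have : Fin.init (Fin.snoc a (j:ℕ) : Fin (m+1) → ℕ) = Fin.init (Fin.snoc b (j:ℕ) : Fin (m+1) → ℕ) := by rw [hab]
        rwa [Fin.init_snoc, Fin.init_snoc] at this), ih]
      simp
    rw [Finset.sum_congr rfl hc, Finset.sum_range_reflect (fun i => (i + m).choose m) (M+1),
      Nat.sum_range_add_choose M m]
    congr 1

namespace S18
variable (k l : ℕ)

def LI : Fin (5*k+4+3*l) := ⟨5*k+3+3*l, by omega⟩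

def wv : Fin (5*k+4+3*l) → ℤ := fun i =>
  if (i:ℕ) = 5*k+3+3*l then 5 else if (i:ℕ) < l-1 then 2 else 4

def vv : Fin (5*k+4+3*l+1) → Fin (5*k+4+3*l) → ℤ := fun j i =>
  if (j:ℕ) = 5*k+4+3*l then wv k l i else if (i:ℕ)+1 = (j:ℕ) then 1 else 0

def fv : Fin (5*k+4+3*l+1) → Fin (5*k+4+3*l) → ℝ := fun j i => ((vv k l j i : ℤ) : ℝ)

lemma H1 (μ : Fin (5*k+4+3*l+1) → ℝ) (i : Fin (5*k+4+3*l)) (hi : (i:ℕ) ≠ 5*k+3+3*l) :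
    ∑ j, μ j * fv k l j i
      = μ ⟨(i:ℕ)+1, by omega⟩ + μ (Fin.last _) * (wv k l i : ℝ) := by
  have key : ∀ j : Fin (5*k+4+3*l+1), μ j * fv k l j i
      = (if j = (⟨(i:ℕ)+1, by omega⟩ : Fin (5*k+4+3*l+1)) then μ j else 0)
        + (if j = Fin.last _ then μ j * (wv k l i : ℝ) else 0) := by
    intro j
    have hival := i.isLt
    by_cases hj : (j:ℕ) = 5*k+4+3*l
    · have hjl : j = Fin.last _ := by apply Fin.ext; simpa using hj
      subst hjl
      have hjs : (Fin.last (5*k+4+3*l)) ≠ (⟨(i:ℕ)+1, by omega⟩ : Fin (5*k+4+3*l+1)) := by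
        intro h; rw [Fin.ext_iff] at h; simp at h; omega
      simp [fv, vv, hjs]
    · have hjl : j ≠ Fin.last _ := by
        intro h; rw [Fin.ext_iff] at h; simp at h; omega
      by_cases hij : (i:ℕ)+1 = (j:ℕ)
      · have hjs : j = (⟨(i:ℕ)+1, by omega⟩ : Fin (5*k+4+3*l+1)) := by
          apply Fin.ext; simp; omega
        rw [if_pos hjs, if_neg hjl]
        simp only [fv, vv, if_neg hj, if_pos hij]
        simp
      · have hjs : j ≠ (⟨(i:ℕ)+1, by omega⟩ : Fin (5*k+4+3*l+1)) := by
          intro h; rw [Fin.ext_iff] at h; simp at h; omega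
        simp only [fv, vv, if_neg hj, if_neg hij, if_neg hjs, if_neg hjl]
        simp
  rw [Finset.sum_congr rfl (fun j _ => key j), Finset.sum_add_distrib,
    Finset.sum_ite_eq' univ _ μ, Finset.sum_ite_eq' univ _ (fun j => μ j * (wv k l i : ℝ))]
  simp

lemma H1b (μ : Fin (5*k+4+3*l+1) → ℝ) :
    ∑ j, μ j * fv k l j (LI k l) = μ (Fin.last _) * 5 := by
  have key : ∀ j : Fin (5*k+4+3*l+1), μ j * fv k l j (LI k l)
      = (if j = Fin.last _ then μ j * 5 else 0) := by
    intro j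
    by_cases hj : (j:ℕ) = 5*k+4+3*l
    · have hjl : j = Fin.last _ := by apply Fin.ext; simpa using hj
      have hw : wv k l (LI k l) = 5 := by simp [wv, LI]
      simp only [fv, vv, if_pos hj, hjl, if_pos rfl, hw]
      norm_num
    · have hjl : j ≠ Fin.last _ := by
        intro h; rw [Fin.ext_iff] at h; simp at h; omega
      have hne : ¬ ((LI k l : ℕ)+1 = (j:ℕ)) := by
        have := j.isLt; simp only [LI]; omega
      simp only [fv, vv, if_neg hj, if_neg hne, if_neg hjl]
      simp
  rw [Finset.sum_congr rfl (fun j _ => key j), Finset.sum_ite_eq' univ _ (fun j => μ j * 5)]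
  simp

lemma sum_if_lt (L M : ℕ) (hLM : L ≤ M) (b c : ℤ) :
    ∑ i ∈ range M, (if i < L then b else c) = (L : ℤ) * b + ((M - L : ℕ) : ℤ) * c := by
  rw [Finset.range_eq_Ico, ← Finset.sum_Ico_consecutive _ (Nat.zero_le L) hLM]
  rw [Finset.sum_congr rfl (fun i hi => if_pos (by simp at hi; omega)),
    Finset.sum_congr (rfl : Finset.Ico L M = Finset.Ico L M)
      (fun i hi => if_neg (by simp at hi; omega)),
    Finset.sum_const, Finset.sum_const]
  simp [Nat.card_Ico]

lemma sumcases (hl : 1 ≤ l) (a b c : ℤ) :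
    ∑ i : Fin (5*k+4+3*l), (if (i:ℕ) = 5*k+3+3*l then a else if (i:ℕ) < l-1 then b else c)
      = a + ((l-1 : ℕ) : ℤ) * b + ((5*k+2*l+4 : ℕ) : ℤ) * c := by
  rw [Fin.sum_univ_eq_sum_range (fun i => if i = 5*k+3+3*l then a else if i < l-1 then b else c),
    show 5*k+4+3*l = (5*k+3+3*l)+1 by omega, Finset.sum_range_succ, if_pos rfl]
  rw [Finset.sum_congr rfl (fun i hi => if_neg (by simp at hi; omega))]
  rw [sum_if_lt (l-1) (5*k+3+3*l) (by omega) b c]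
  have : (5*k+3+3*l) - (l-1) = 5*k+2*l+4 := by omega
  rw [this]; ring

def PP : Set (Fin (5*k+4+3*l) → ℝ) := convexHull ℝ (Set.range (fv k l))

def Cond (n : ℕ) (x : Fin (5*k+4+3*l) → ℤ) : Prop :=
  0 ≤ x (LI k l) ∧ (∀ i, x (LI k l) * wv k l i ≤ 5 * x i) ∧
    (∑ i, (5 * x i - x (LI k l) * wv k l i)) + x (LI k l) ≤ 5 * n

def KK (n : ℝ) : Set (Fin (5*k+4+3*l) → ℝ) :=
  {z | 0 ≤ z (LI k l) ∧ (∀ i, z (LI k l) * (wv k l i : ℝ) ≤ 5 * z i) ∧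
    (∑ i, (5 * z i - z (LI k l) * (wv k l i : ℝ))) + z (LI k l) ≤ 5 * n}

lemma KK_convex (n : ℝ) : Convex ℝ (KK k l n) := by
  intro x hx y hy a b ha hb hab
  obtain ⟨hx1, hx2, hx3⟩ := hx
  obtain ⟨hy1, hy2, hy3⟩ := hy
  have happ : ∀ i, (a • x + b • y) i = a * x i + b * y i := fun i => rfl
  refine ⟨?_, ?_, ?_⟩
  · rw [happ]; nlinarith
  · intro i
    rw [happ, happ]
    have t1 := mul_le_mul_of_nonneg_left (hx2 i) ha
    have t2 := mul_le_mul_of_nonneg_left (hy2 i) hb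
    nlinarith
  · have e1 : ∀ i : Fin (5*k+4+3*l), 5 * (a • x + b • y) i - (a • x + b • y) (LI k l) * (wv k l i : ℝ)
        = a * (5 * x i - x (LI k l) * (wv k l i : ℝ)) + b * (5 * y i - y (LI k l) * (wv k l i : ℝ)) := by
      intro i; rw [happ, happ]; ring
    rw [Finset.sum_congr rfl (fun i _ => e1 i), Finset.sum_add_distrib, ← Finset.mul_sum,
      ← Finset.mul_sum, happ]
    have t1 := mul_le_mul_of_nonneg_left hx3 ha
    have t2 := mul_le_mul_of_nonneg_left hy3 hb
    have h5 : a*(5*n) + b*(5*n) = 5*n := by rw [← add_mul, hab, one_mul]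
    linarith

lemma vert_mem (j : Fin (5*k+4+3*l+1)) : fv k l j ∈ KK k l 1 := by
  by_cases hj : (j:ℕ) = 5*k+4+3*l
  · have hw : ∀ i, fv k l j i = (wv k l i : ℝ) := by
      intro i; simp [fv, vv, hj]
    have hwL : wv k l (LI k l) = 5 := by simp [wv, LI]
    refine ⟨?_, ?_, ?_⟩
    · rw [hw, hwL]; norm_num
    · intro i; rw [hw, hw, hwL]; norm_num
    · rw [Finset.sum_congr rfl (fun i _ => by rw [hw, hw, hwL]; push_cast; ring : ∀ i ∈ univ,
        5 * fv k l j i - fv k l j (LI k l) * (wv k l i:ℝ) = 5 * (wv k l i:ℝ) - 5 * (wv k l i:ℝ))]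
      simp [hw, hwL]
  · have hz : ∀ i : Fin (5*k+4+3*l), fv k l j i = if ((i:ℕ)+1 = (j:ℕ)) then 1 else 0 := by
      intro i; simp only [fv, vv, if_neg hj]; split_ifs <;> simp
    have hzL : fv k l j (LI k l) = 0 := by
      rw [hz]
      have : ¬((LI k l : ℕ) + 1 = (j:ℕ)) := by have := j.isLt; simp only [LI]; omega
      rw [if_neg this]
    refine ⟨by rw [hzL], ?_, ?_⟩
    · intro i; rw [hzL, hz]; split_ifs <;> norm_num
    · rw [hzL]
      have e1 : ∀ i : Fin (5*k+4+3*l), (5 * fv k l j i - 0 * (wv k l i:ℝ))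
          = if i = (⟨(j:ℕ)-1, by have := j.isLt; omega⟩ : Fin (5*k+4+3*l)) then
              (if 0 < (j:ℕ) then 5 else 0) else 0 := by
        intro i
        rw [hz]
        rcases Nat.eq_zero_or_pos (j:ℕ) with h0 | h0
        · simp [h0]
        · by_cases hij : (i:ℕ)+1 = (j:ℕ)
          · rw [if_pos hij, if_pos (by apply Fin.ext; simp; omega), if_pos h0]; norm_num
          · rw [if_neg hij, if_neg (by intro h; rw [Fin.ext_iff] at h; simp at h; omega)]
            norm_num
      rw [Finset.sum_congr rfl (fun i _ => e1 i), Finset.sum_ite_eq' univ _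
        (fun _ => if 0 < (j:ℕ) then (5:ℝ) else 0)]
      split_ifs <;> norm_num

lemma PP_nonempty : (PP k l).Nonempty :=
  ⟨fv k l 0, subset_convexHull ℝ _ (Set.mem_range_self 0)⟩

lemma PP_subset_KK : PP k l ⊆ KK k l 1 :=
  convexHull_min (by rintro z ⟨j, rfl⟩; exact vert_mem k l j) (KK_convex k l 1)

lemma cond_zero (x : Fin (5*k+4+3*l) → ℤ) (hC : Cond k l 0 x) : x = 0 := by
  obtain ⟨h1, h2, h3⟩ := hC
  have hnn : ∀ i ∈ univ, 0 ≤ 5 * x i - x (LI k l) * wv k l i := by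
    intro i _; have := h2 i; omega
  have hs0 : ∑ i, (5 * x i - x (LI k l) * wv k l i) = 0 := by
    have := Finset.sum_nonneg hnn
    omega
  have heach := (Finset.sum_eq_zero_iff_of_nonneg hnn).1 hs0
  have hL : x (LI k l) = 0 := by omega
  funext i
  have := heach i (mem_univ i)
  rw [hL] at this
  simp only [Pi.zero_apply]
  omega

def mu (n : ℕ) (x : Fin (5*k+4+3*l) → ℤ) : Fin (5*k+4+3*l+1) → ℝ := fun j =>
  if (j:ℕ) = 5*k+4+3*l then (x (LI k l) : ℝ)/5
  else if (j:ℕ) = 0 then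
    (n : ℝ) - (((∑ i, (5 * x i - x (LI k l) * wv k l i) : ℤ):ℝ) + (x (LI k l):ℝ))/5
  else (5 * (x ⟨(j:ℕ)-1, by have := j.isLt; omega⟩ : ℝ)
    - (x (LI k l):ℝ) * (wv k l ⟨(j:ℕ)-1, by have := j.isLt; omega⟩ : ℝ))/5

lemma mu_last (n : ℕ) (x : Fin (5*k+4+3*l) → ℤ) :
    mu k l n x (Fin.last _) = (x (LI k l) : ℝ)/5 := by
  simp [mu]

lemma mu_zero (n : ℕ) (x : Fin (5*k+4+3*l) → ℤ) :
    mu k l n x 0 = (n : ℝ) - (((∑ i, (5 * x i - x (LI k l) * wv k l i) : ℤ):ℝ) + (x (LI k l):ℝ))/5 := by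
  simp only [mu, Fin.val_zero]
  rw [if_neg (by omega)]
  simp

lemma mu_succ (n : ℕ) (x : Fin (5*k+4+3*l) → ℤ) (j : Fin (5*k+4+3*l)) :
    mu k l n x j.succ = (5 * (x j:ℝ) - (x (LI k l):ℝ) * (wv k l j:ℝ))/5
      + (if (j:ℕ) = 5*k+3+3*l then (x (LI k l):ℝ)/5 else 0) := by
  have hjlt := j.isLt
  by_cases hj : (j:ℕ) = 5*k+3+3*l
  · have hjL : j = LI k l := by apply Fin.ext; simpa [LI] using hj
    simp only [mu, Fin.val_succ]
    rw [if_pos (by omega), if_pos hj, hjL]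
    have hwL : wv k l (LI k l) = 5 := by simp [wv, LI]
    rw [hwL]
    push_cast
    ring
  · simp only [mu, Fin.val_succ]
    rw [if_neg (by omega), if_neg (by omega), if_neg hj]
    have hidx : (⟨(j:ℕ)+1-1, by omega⟩ : Fin (5*k+4+3*l)) = j := by apply Fin.ext; simp
    rw [hidx]
    ring

lemma mem_iff (n : ℕ) (x : Fin (5*k+4+3*l) → ℤ) :
    (fun i => (x i : ℝ)) ∈ (n : ℝ) • PP k l ↔ Cond k l n x := by
  rcases Nat.eq_zero_or_pos n with rfl | hn
  · have hzs : ((0:ℝ) • PP k l : Set (Fin (5*k+4+3*l) → ℝ)) = 0 :=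
      Set.zero_smul_set (PP_nonempty k l)
    rw [Nat.cast_zero, hzs]
    constructor
    · intro hx
      rw [Set.mem_zero] at hx
      have hx0 : ∀ i, x i = 0 := by
        intro i
        have := congrFun hx i
        rw [Pi.zero_apply] at this
        exact_mod_cast this
      refine ⟨by rw [hx0], fun i => by rw [hx0, hx0]; ring_nf; exact le_refl 0, ?_⟩
      rw [Finset.sum_congr rfl (fun i _ => by rw [hx0, hx0]; ring : ∀ i ∈ univ,
        5 * x i - x (LI k l) * wv k l i = 0)]
      rw [hx0]
      simp
    · intro hC
      have := cond_zero k l x hC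
      subst this
      rw [Set.mem_zero]
      funext i
      simp
  · constructor
    · rintro ⟨z, hz, hxz⟩
      have hzK := PP_subset_KK k l hz
      obtain ⟨hz1, hz2, hz3⟩ := hzK
      have hxi : ∀ i, (x i : ℝ) = n * z i := fun i => (congrFun hxz i).symm
      have hn' : (0:ℝ) < n := by exact_mod_cast hn
      refine ⟨?_, ?_, ?_⟩
      · have : (0:ℝ) ≤ (x (LI k l) : ℝ) := by rw [hxi]; positivity
        exact_mod_cast this
      · intro i
        have : (x (LI k l) * wv k l i : ℝ) ≤ (5 * x i : ℝ) := by
          push_cast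
          rw [hxi, hxi]
          have := mul_le_mul_of_nonneg_left (hz2 i) (le_of_lt hn')
          nlinarith
        exact_mod_cast this
      · have : ((∑ i, (5 * x i - x (LI k l) * wv k l i)) + x (LI k l) : ℝ) ≤ ((5 * n : ℤ) : ℝ) := by
          push_cast
          have e1 : ∀ i ∈ univ, (5 * (x i:ℝ) - (x (LI k l):ℝ) * (wv k l i:ℝ))
              = n * (5 * z i - z (LI k l) * (wv k l i : ℝ)) := by
            intro i _; rw [hxi, hxi]; ring
          rw [Finset.sum_congr rfl e1, ← Finset.mul_sum, hxi (LI k l)]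
          have := mul_le_mul_of_nonneg_left hz3 (le_of_lt hn')
          nlinarith
        exact_mod_cast this
    · intro hC
      obtain ⟨h1, h2, h3⟩ := hC
      have hn' : (0:ℝ) < n := by exact_mod_cast hn
      have c0 : ∀ j, 0 ≤ mu k l n x j := by
        intro j
        have hjlt := j.isLt
        simp only [mu]
        split_ifs with ha hb
        · have : (0:ℝ) ≤ (x (LI k l):ℝ) := by exact_mod_cast h1
          linarith
        · have : (((∑ i, (5 * x i - x (LI k l) * wv k l i)) + x (LI k l) : ℤ):ℝ) ≤ ((5*(n:ℤ) : ℤ):ℝ) := by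
            exact_mod_cast h3
          push_cast at this ⊢
          linarith
        · have h2' := h2 ⟨(j:ℕ)-1, by omega⟩
          have : ((x (LI k l) * wv k l ⟨(j:ℕ)-1, by omega⟩ : ℤ):ℝ)
              ≤ ((5 * x ⟨(j:ℕ)-1, by omega⟩ : ℤ):ℝ) := by exact_mod_cast h2'
          push_cast at this
          linarith
      have c1 : ∑ j, mu k l n x j = n := by
        rw [Fin.sum_univ_succ, mu_zero,
          Finset.sum_congr rfl (fun j _ => mu_succ k l n x j), Finset.sum_add_distrib]
        have e2 : ∑ j : Fin (5*k+4+3*l), (5 * (x j:ℝ) - (x (LI k l):ℝ) * (wv k l j:ℝ))/5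
            = (((∑ i, (5 * x i - x (LI k l) * wv k l i) : ℤ)):ℝ)/5 := by
          push_cast
          rw [← Finset.sum_div]
        have e3 : ∑ j : Fin (5*k+4+3*l), (if (j:ℕ) = 5*k+3+3*l then (x (LI k l):ℝ)/5 else 0)
            = (x (LI k l):ℝ)/5 := by
          have hj' : ∀ j : Fin (5*k+4+3*l), ((j:ℕ) = 5*k+3+3*l) ↔ (j = LI k l) := by
            intro j; rw [Fin.ext_iff]; simp [LI]
          rw [Finset.sum_congr rfl (fun j _ => by rw [if_congr (hj' j) rfl rfl]),
            Finset.sum_ite_eq' univ _ (fun _ => (x (LI k l):ℝ)/5)]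
          simp
        rw [e2, e3]
        ring
      have c2 : ∀ i, ∑ j, mu k l n x j * fv k l j i = (x i : ℝ) := by
        intro i
        by_cases hi : (i:ℕ) = 5*k+3+3*l
        · have hiL : i = LI k l := by apply Fin.ext; simpa [LI] using hi
          rw [hiL, H1b, mu_last]
          ring
        · rw [H1 k l (mu k l n x) i hi]
          have hsx : (⟨(i:ℕ)+1, by omega⟩ : Fin (5*k+4+3*l+1)) = i.succ := by
            apply Fin.ext; simp
          rw [hsx, mu_succ, if_neg hi, mu_last]
          ring
      refine ⟨Finset.univ.centerMass (mu k l n x) (fv k l), ?_, ?_⟩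
      · exact Finset.centerMass_mem_convexHull univ (fun j _ => c0 j)
          (by rw [c1]; exact hn') (fun j _ => Set.mem_range_self j)
      · rw [Finset.centerMass, c1]
        funext i
        simp only [Pi.smul_apply, smul_eq_mul]
        rw [Finset.sum_apply]
        have hterm : ∀ j ∈ univ, (mu k l n x j • fv k l j) i = mu k l n x j * fv k l j i :=
          fun j _ => rfl
        rw [Finset.sum_congr rfl hterm, c2]
        field_simp

def ht (t : ℕ) : ℕ :=
  if t = 0 then 0 else if t = 1 then k+l+1 else if t = 2 then 2*k+l+2
    else if t = 3 then 3*k+2*l+3 else 4*k+2*l+4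

def cw (t : ℕ) : Fin (5*k+4+3*l) → ℤ := fun i =>
  if (i:ℕ) = 5*k+3+3*l then 0 else if (i:ℕ) < l-1 then (((t+1)/2 : ℕ) : ℤ) else (t : ℤ)

def Phi (t : ℕ) (g : Fin (5*k+4+3*l) → ℕ) : Fin (5*k+4+3*l) → ℤ := fun i =>
  if (i:ℕ) = 5*k+3+3*l then 5 * (g i : ℤ) + t
  else (g i : ℤ) + (g (LI k l) : ℤ) * wv k l i + cw k l t i

def St (n t : ℕ) : Set (Fin (5*k+4+3*l) → ℕ) := {g | (∑ i, g i) + ht k l t ≤ n}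

lemma phi_last (t : ℕ) (g : Fin (5*k+4+3*l) → ℕ) :
    Phi k l t g (LI k l) = 5 * (g (LI k l) : ℤ) + t := by
  simp [Phi, LI]

lemma phi_term (t : ℕ) (g : Fin (5*k+4+3*l) → ℕ) (i : Fin (5*k+4+3*l)) :
    5 * Phi k l t g i - Phi k l t g (LI k l) * wv k l i
      = 5 * (g i : ℤ) + (if (i:ℕ) = 5*k+3+3*l then -5 * (g (LI k l) : ℤ)
          else if (i:ℕ) < l-1 then (5 * (((t+1)/2 : ℕ):ℤ) - 2*t) else (t:ℤ)) := by
  rw [phi_last]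
  by_cases hi : (i:ℕ) = 5*k+3+3*l
  · have hiL : i = LI k l := by apply Fin.ext; simpa [LI] using hi
    have hwL : wv k l i = 5 := by simp [wv, hi]
    rw [if_pos hi, hwL, hiL]
    simp only [Phi, LI]
    rw [if_pos (by simp)]
    push_cast
    ring
  · by_cases hi2 : (i:ℕ) < l-1
    · have hw : wv k l i = 2 := by simp [wv, hi, hi2]
      have hc : cw k l t i = (((t+1)/2 : ℕ):ℤ) := by simp [cw, hi, hi2]
      rw [if_neg hi, if_pos hi2]
      simp only [Phi, if_neg hi]
      rw [hw, hc]
      push_cast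
      ring
    · have hw : wv k l i = 4 := by simp [wv, hi, hi2]
      have hc : cw k l t i = (t:ℤ) := by simp [cw, hi, hi2]
      rw [if_neg hi, if_neg hi2]
      simp only [Phi, if_neg hi]
      rw [hw, hc]
      push_cast
      ring

lemma sum_phi (hl : 1 ≤ l) (t : ℕ) (g : Fin (5*k+4+3*l) → ℕ) :
    ∑ i, (5 * Phi k l t g i - Phi k l t g (LI k l) * wv k l i)
      = 5 * (∑ i, (g i : ℤ)) - 5 * (g (LI k l) : ℤ)
        + ((l-1:ℕ):ℤ) * (5 * (((t+1)/2 : ℕ):ℤ) - 2*t) + ((5*k+2*l+4:ℕ):ℤ) * t := by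
  rw [Finset.sum_congr rfl (fun i _ => phi_term k l t g i), Finset.sum_add_distrib,
    ← Finset.mul_sum, sumcases k l hl]
  ring

lemma phi_cond (hl : 1 ≤ l) (n t : ℕ) (ht5 : t < 5) (g : Fin (5*k+4+3*l) → ℕ) :
    Cond k l n (Phi k l t g) ↔ (∑ i, g i) + ht k l t ≤ n := by
  have hSg : (∑ i, (g i : ℤ)) = ((∑ i, g i : ℕ) : ℤ) := by push_cast; rfl
  constructor
  · rintro ⟨_, _, h3⟩
    rw [sum_phi k l hl, phi_last, hSg] at h3
    interval_cases t <;> simp [ht] at h3 ⊢ <;> omega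
  · intro hs
    refine ⟨by rw [phi_last]; positivity, ?_, ?_⟩
    · intro i
      rw [← sub_nonneg, phi_term]
      by_cases hi : (i:ℕ) = 5*k+3+3*l
      · have hiL : i = LI k l := by apply Fin.ext; simpa [LI] using hi
        rw [if_pos hi, hiL]
        omega
      · rw [if_neg hi]
        split_ifs <;> omega
    · rw [sum_phi k l hl, phi_last, hSg]
      interval_cases t <;> simp [ht] at hs ⊢ <;> omega

lemma phi_inj (t : ℕ) : Function.Injective (Phi k l t) := by
  intro a b h
  have hL := congrFun h (LI k l)
  rw [phi_last, phi_last] at hL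
  have haL : a (LI k l) = b (LI k l) := by omega
  funext i
  have hi := congrFun h i
  by_cases hc : (i:ℕ) = 5*k+3+3*l
  · simp only [Phi, if_pos hc] at hi
    omega
  · simp only [Phi, if_neg hc, haL] at hi
    have : (a i : ℤ) = b i := by linarith
    exact_mod_cast this

lemma cond_iff_exists (hl : 1 ≤ l) (n : ℕ) (x : Fin (5*k+4+3*l) → ℤ) :
    Cond k l n x ↔ ∃ t < 5, ∃ g ∈ St k l n t, x = Phi k l t g := by
  constructor
  · intro hC
    obtain ⟨h1, h2, h3⟩ := hC
    set T : ℕ := (x (LI k l)).toNat with hT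
    have hTx : (T:ℤ) = x (LI k l) := Int.toNat_of_nonneg h1
    set t : ℕ := T % 5 with htdef
    have ht5 : t < 5 := Nat.mod_lt _ (by norm_num)
    set q : ℕ := T / 5 with hqdef
    have hqt : 5 * q + t = T := by omega
    have hgL : (if ((LI k l : Fin (5*k+4+3*l)):ℕ) = 5*k+3+3*l then q
        else (x (LI k l) - (q:ℤ) * wv k l (LI k l) - cw k l t (LI k l)).toNat) = q := by
      simp [LI]
    have hxg : x = Phi k l t (fun i => if (i:ℕ) = 5*k+3+3*l then q
        else (x i - (q:ℤ) * wv k l i - cw k l t i).toNat) := by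
      funext i
      by_cases hc : (i:ℕ) = 5*k+3+3*l
      · have hiL : i = LI k l := by apply Fin.ext; simpa [LI] using hc
        rw [hiL, phi_last, hgL]
        omega
      · have h2' := h2 i
        simp only [Phi, if_neg hc, hgL]
        by_cases hi2 : (i:ℕ) < l-1
        · have hw : wv k l i = 2 := by simp [wv, hc, hi2]
          have hcw : cw k l t i = (((t+1)/2 : ℕ):ℤ) := by simp [cw, hc, hi2]
          rw [hw] at h2' ⊢
          rw [hcw]
          rw [← hTx] at h2'
          omega
        · have hw : wv k l i = 4 := by simp [wv, hc, hi2]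
          have hcw : cw k l t i = (t:ℤ) := by simp [cw, hc, hi2]
          rw [hw] at h2' ⊢
          rw [hcw]
          rw [← hTx] at h2'
          omega
    refine ⟨t, ht5, _, ?_, hxg⟩
    exact (phi_cond k l hl n t ht5 _).1 (by rw [← hxg]; exact ⟨h1, h2, h3⟩)
  · rintro ⟨t, ht5, g, hg, rfl⟩
    exact (phi_cond k l hl n t ht5 g).2 hg

lemma St_eq (n t : ℕ) (h : ht k l t ≤ n) :
    St k l n t = ↑(Fb (5*k+4+3*l) (n - ht k l t)) := by
  ext g
  rw [Finset.mem_coe, mem_Fb]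
  simp only [St, Set.mem_setOf_eq]
  omega

lemma St_empty (n t : ℕ) (h : ¬ ht k l t ≤ n) : St k l n t = ∅ := by
  ext g
  simp only [St, Set.mem_setOf_eq, Set.mem_empty_iff_false, iff_false]
  omega

lemma St_finite (n t : ℕ) : (St k l n t).Finite := by
  by_cases h : ht k l t ≤ n
  · rw [St_eq k l n t h]; exact (Fb _ _).finite_toSet
  · rw [St_empty k l n t h]; exact Set.finite_empty

lemma ncard_image_St (n t : ℕ) :
    ((Phi k l t '' St k l n t).ncard : ℤ)
      = if ht k l t ≤ n then (((n - ht k l t) + (5*k+4+3*l)).choose (5*k+4+3*l) : ℤ) else 0 := by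
  rw [Set.ncard_image_of_injective _ (phi_inj k l t)]
  by_cases h : ht k l t ≤ n
  · rw [if_pos h, St_eq k l n t h, Set.ncard_coe_finset, card_Fb]
  · rw [if_neg h, St_empty k l n t h, Set.ncard_empty, Nat.cast_zero]

lemma disj_images (n : ℕ) (t t' : ℕ) (h5 : t < 5) (h5' : t' < 5) (hne : t ≠ t') :
    Disjoint (Phi k l t '' St k l n t) (Phi k l t' '' St k l n t') := by
  rw [Set.disjoint_left]
  rintro x ⟨g, _, rfl⟩ ⟨g', _, he⟩
  have := congrFun he (LI k l)
  rw [phi_last, phi_last] at this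
  omega

lemma lattice_eq (hl : 1 ≤ l) (n : ℕ) :
    {x : Fin (5*k+4+3*l) → ℤ | (fun i => (x i : ℝ)) ∈ (n : ℝ) • PP k l}
      = ((((Phi k l 0 '' St k l n 0) ∪ (Phi k l 1 '' St k l n 1)) ∪ (Phi k l 2 '' St k l n 2))
          ∪ (Phi k l 3 '' St k l n 3)) ∪ (Phi k l 4 '' St k l n 4) := by
  ext x
  rw [Set.mem_setOf_eq, mem_iff, cond_iff_exists k l hl]
  constructor
  · rintro ⟨t, ht5, g, hg, rfl⟩
    interval_cases t
    · exact Or.inl (Or.inl (Or.inl (Or.inl ⟨g, hg, rfl⟩)))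
    · exact Or.inl (Or.inl (Or.inl (Or.inr ⟨g, hg, rfl⟩)))
    · exact Or.inl (Or.inl (Or.inr ⟨g, hg, rfl⟩))
    · exact Or.inl (Or.inr ⟨g, hg, rfl⟩)
    · exact Or.inr ⟨g, hg, rfl⟩
  · rintro ((((⟨g,hg,rfl⟩|⟨g,hg,rfl⟩)|⟨g,hg,rfl⟩)|⟨g,hg,rfl⟩)|⟨g,hg,rfl⟩)
    exacts [⟨0, by norm_num, g, hg, rfl⟩, ⟨1, by norm_num, g, hg, rfl⟩,
      ⟨2, by norm_num, g, hg, rfl⟩, ⟨3, by norm_num, g, hg, rfl⟩,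
      ⟨4, by norm_num, g, hg, rfl⟩]

lemma ehrhart_eq (hl : 1 ≤ l) (n : ℕ) :
    (({x : Fin (5*k+4+3*l) → ℤ | (fun i => (x i : ℝ)) ∈ (n : ℝ) • PP k l}).ncard : ℤ)
      = ∑ t ∈ range 5,
          (if ht k l t ≤ n then (((n - ht k l t) + (5*k+4+3*l)).choose (5*k+4+3*l) : ℤ) else 0) := by
  have hfin : ∀ t, (Phi k l t '' St k l n t).Finite :=
    fun t => (St_finite k l n t).image _
  have hd := disj_images k l n
  rw [lattice_eq k l hl n]
  rw [Set.ncard_union_eq (by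
      rw [Set.disjoint_union_left, Set.disjoint_union_left, Set.disjoint_union_left]
      exact ⟨⟨⟨hd 0 4 (by norm_num) (by norm_num) (by norm_num),
        hd 1 4 (by norm_num) (by norm_num) (by norm_num)⟩,
        hd 2 4 (by norm_num) (by norm_num) (by norm_num)⟩,
        hd 3 4 (by norm_num) (by norm_num) (by norm_num)⟩)
      (((((hfin 0).union (hfin 1)).union (hfin 2)).union (hfin 3))) (hfin 4)]
  rw [Set.ncard_union_eq (by
      rw [Set.disjoint_union_left, Set.disjoint_union_left]
      exact ⟨⟨hd 0 3 (by norm_num) (by norm_num) (by norm_num),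
        hd 1 3 (by norm_num) (by norm_num) (by norm_num)⟩,
        hd 2 3 (by norm_num) (by norm_num) (by norm_num)⟩)
      ((((hfin 0).union (hfin 1)).union (hfin 2))) (hfin 3)]
  rw [Set.ncard_union_eq (by
      rw [Set.disjoint_union_left]
      exact ⟨hd 0 2 (by norm_num) (by norm_num) (by norm_num),
        hd 1 2 (by norm_num) (by norm_num) (by norm_num)⟩)
      (((hfin 0).union (hfin 1))) (hfin 2)]
  rw [Set.ncard_union_eq (hd 0 1 (by norm_num) (by norm_num) (by norm_num))
      (hfin 0) (hfin 1)]
  rw [Finset.sum_range_succ, Finset.sum_range_succ, Finset.sum_range_succ,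
    Finset.sum_range_succ, Finset.sum_range_one]
  push_cast
  rw [ncard_image_St, ncard_image_St, ncard_image_St, ncard_image_St, ncard_image_St]

lemma fv_zero : fv k l 0 = 0 := by
  funext i
  simp only [fv, vv]
  rw [if_neg (by rw [Fin.val_zero]; omega), if_neg (by rw [Fin.val_zero]; omega)]
  norm_num

lemma affind : AffineIndependent ℝ (fv k l) := by
  rw [affineIndependent_iff_linearIndependent_vsub ℝ (fv k l) 0]
  rw [Fintype.linearIndependent_iff]
  intro c hc j₀
  classical
  set μ : Fin (5*k+4+3*l+1) → ℝ := fun j => if h : j = 0 then 0 else c ⟨j, h⟩ with hμ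
  have hμval : ∀ (j : Fin (5*k+4+3*l+1)) (h : j ≠ 0), μ j = c ⟨j, h⟩ := by
    intro j h; rw [hμ]; exact dif_neg h
  have hsum0 : ∑ j, μ j • fv k l j = 0 := by
    rw [Finset.sum_eq_sum_sdiff_singleton_add (Finset.mem_univ (0 : Fin (5*k+4+3*l+1)))
      (fun j => μ j • fv k l j)]
    have h0 : μ 0 • fv k l 0 = 0 := by rw [hμ]; simp
    rw [h0, add_zero]
    rw [Finset.sum_subtype (p := fun x : Fin (5*k+4+3*l+1) => x ≠ 0) (univ \ {0})
      (by intro x; simp) (fun j => μ j • fv k l j)]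
    rw [← hc]
    apply Finset.sum_congr rfl
    intro j _
    rw [hμval j.1 j.2, vsub_eq_sub, fv_zero, sub_zero]
  have hcoord : ∀ i, ∑ j, μ j * fv k l j i = 0 := by
    intro i
    have := congrFun hsum0 i
    rw [Finset.sum_apply] at this
    simpa using this
  have hlast : μ (Fin.last _) = 0 := by
    have := hcoord (LI k l)
    rw [H1b] at this
    linarith
  have hother : ∀ i : Fin (5*k+4+3*l), (i:ℕ) ≠ 5*k+3+3*l → μ ⟨(i:ℕ)+1, by omega⟩ = 0 := by
    intro i hi
    have := hcoord i
    rw [H1 k l μ i hi, hlast] at this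
    linarith
  have hj := j₀.2
  rw [← hμval j₀.1 j₀.2]
  by_cases hN : (j₀.1 : ℕ) = 5*k+4+3*l
  · have : j₀.1 = Fin.last _ := by apply Fin.ext; simpa using hN
    rw [this]; exact hlast
  · have h1 : 1 ≤ (j₀.1 : ℕ) := by
      rcases Nat.eq_zero_or_pos (j₀.1 : ℕ) with h | h
      · exact absurd (Fin.ext h) j₀.2
      · omega
    have hlt := j₀.1.isLt
    have hieq : (⟨((⟨(j₀.1:ℕ)-1, by omega⟩ : Fin (5*k+4+3*l)) : ℕ)+1, by omega⟩ :
        Fin (5*k+4+3*l+1)) = j₀.1 := by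
      apply Fin.ext; simp; omega
    have := hother ⟨(j₀.1:ℕ)-1, by omega⟩ (by simp; omega)
    rwa [hieq] at this

lemma inner_sum (D s i : ℕ) :
    ∑ j ∈ range (i+1), (-1:ℤ)^(i-j) * (((D+1).choose (i-j) : ℕ) : ℤ)
        * (if s ≤ j then (((j - s) + D).choose D : ℤ) else 0)
      = if i = s then 1 else 0 := by
  by_cases hsi : s ≤ i
  · rw [range_eq_Ico, ← Finset.sum_Ico_consecutive _ (Nat.zero_le s) (by omega : s ≤ i+1)]
    rw [Finset.sum_eq_zero (fun j hj => by
      rw [if_neg (by simp at hj; omega), mul_zero]), zero_add]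
    rw [Finset.sum_Ico_eq_sum_range]
    have hlen : i + 1 - s = (i - s) + 1 := by omega
    rw [hlen]
    have hterm : ∀ u ∈ range ((i-s)+1),
        (-1:ℤ)^(i-(s+u)) * (((D+1).choose (i-(s+u)) : ℕ) : ℤ)
            * (if s ≤ s+u then (((s+u - s) + D).choose D : ℤ) else 0)
          = (-1:ℤ)^((i-s)-u) * (((D+1).choose ((i-s)-u) : ℕ) : ℤ) * (((u + D).choose D : ℕ) : ℤ) := by
      intro u hu
      rw [if_pos (by omega)]
      have e1 : i - (s+u) = (i-s) - u := by omega
      have e2 : s + u - s = u := by omega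
      rw [e1, e2]
    rw [Finset.sum_congr rfl hterm]
    have hcongr : ∀ u ∈ range ((i-s)+1),
        (fun r => (-1:ℤ)^r * (((D+1).choose r : ℕ) : ℤ) * ((((i-s) - r + D).choose D : ℕ) : ℤ)) ((i-s)+1-1-u)
          = (-1:ℤ)^((i-s)-u) * (((D+1).choose ((i-s)-u) : ℕ) : ℤ) * (((u + D).choose D : ℕ) : ℤ) := by
      intro u hu
      simp only []
      have e3 : (i-s)+1-1-u = (i-s)-u := by omega
      have e4 : (i-s) - ((i-s)-u) = u := by simp at hu; omega
      rw [e3, e4]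
    rw [← Finset.sum_congr rfl hcongr,
      Finset.sum_range_reflect (fun r => (-1:ℤ)^r * (((D+1).choose r : ℕ) : ℤ)
        * ((((i-s) - r + D).choose D : ℕ) : ℤ)) ((i-s)+1)]
    have hGG : ∑ r ∈ range ((i-s)+1), (-1:ℤ)^r * (((D+1).choose r : ℕ) : ℤ)
        * ((((i-s) - r + D).choose D : ℕ) : ℤ) = GG (D+1) D (i-s) := rfl
    rw [hGG, GG_diag]
    by_cases h0 : i = s
    · rw [if_pos (by omega), if_pos h0]
    · rw [if_neg (by omega), if_neg h0]
  · rw [Finset.sum_eq_zero (fun j hj => by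
      rw [if_neg (by simp at hj; omega), mul_zero]), if_neg (by omega)]

lemma delta_eq (hl : 1 ≤ l) (i : ℕ) :
    ∑ j ∈ Finset.range (i + 1),
        (-1 : ℤ) ^ (i - j) * (Nat.choose (5*k+4+3*l + 1) (i - j))
          * (({x : Fin (5*k+4+3*l) → ℤ | (fun i => (x i : ℝ)) ∈ (j : ℝ) • PP k l}).ncard : ℤ)
      = if i = 0 ∨ i = k + l + 1 ∨ i = 2 * k + l + 2 ∨ i = 3 * k + 2 * l + 3 ∨
          i = 4 * k + 2 * l + 4 then 1 else 0 := by
  calc ∑ j ∈ Finset.range (i + 1),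
        (-1 : ℤ) ^ (i - j) * (Nat.choose (5*k+4+3*l + 1) (i - j))
          * (({x : Fin (5*k+4+3*l) → ℤ | (fun i => (x i : ℝ)) ∈ (j : ℝ) • PP k l}).ncard : ℤ)
      = ∑ j ∈ Finset.range (i + 1), ∑ t ∈ range 5,
          (-1 : ℤ) ^ (i - j) * (Nat.choose (5*k+4+3*l + 1) (i - j))
            * (if ht k l t ≤ j then (((j - ht k l t) + (5*k+4+3*l)).choose (5*k+4+3*l) : ℤ) else 0) := by
        refine Finset.sum_congr rfl (fun j _ => ?_)
        rw [ehrhart_eq k l hl j, Finset.mul_sum]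
    _ = ∑ t ∈ range 5, ∑ j ∈ Finset.range (i + 1),
          (-1 : ℤ) ^ (i - j) * (Nat.choose (5*k+4+3*l + 1) (i - j))
            * (if ht k l t ≤ j then (((j - ht k l t) + (5*k+4+3*l)).choose (5*k+4+3*l) : ℤ) else 0) :=
        Finset.sum_comm
    _ = ∑ t ∈ range 5, (if i = ht k l t then 1 else 0) :=
        Finset.sum_congr rfl (fun t _ => inner_sum (5*k+4+3*l) (ht k l t) i)
    _ = if i = 0 ∨ i = k + l + 1 ∨ i = 2 * k + l + 2 ∨ i = 3 * k + 2 * l + 3 ∨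
          i = 4 * k + 2 * l + 4 then 1 else 0 := by
        have h0 : ht k l 0 = 0 := by norm_num [ht]
        have h1 : ht k l 1 = k+l+1 := by norm_num [ht]
        have h2 : ht k l 2 = 2*k+l+2 := by norm_num [ht]
        have h3 : ht k l 3 = 3*k+2*l+3 := by norm_num [ht]
        have h4 : ht k l 4 = 4*k+2*l+4 := by norm_num [ht]
        rw [Finset.sum_range_succ, Finset.sum_range_succ, Finset.sum_range_succ,
          Finset.sum_range_succ, Finset.sum_range_one, h0, h1, h2, h3, h4]
        split_ifs <;> omega

end S18

end Aux

theorem stmt18 (k l : ℕ) (hl : 1 ≤ l) (d' : ℕ) (hd' : d' = 5 * k + 4 + 3 * l) :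
    ∃ v : Fin (d' + 1) → Fin d' → ℤ,
      AffineIndependent ℝ (fun j => fun i => ((v j i : ℤ) : ℝ)) ∧
      ∀ i ≤ d',
        deltaVec (convexHull ℝ (Set.range fun j => fun i => ((v j i : ℤ) : ℝ))) d' i =
          if i = 0 ∨ i = k + l + 1 ∨ i = 2 * k + l + 2 ∨ i = 3 * k + 2 * l + 3 ∨
              i = 4 * k + 2 * l + 4 then 1 else 0 := by
  subst hd'
  refine ⟨S18.vv k l, ?_, ?_⟩
  · exact S18.affind k l
  · intro i hi
    exact S18.delta_eq k l hl i
end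
end
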